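/- arXiv:2102.06861 — 2 statements merged into one kernel-verified Lean document; each statement's English description precedes it below -/
import Mathlib

section
/- There exist constants δ ∈ (0,1] and c₀ > 0 such that: for every smooth map η : ℝ² → ℝ², 2-periodic in each variable, satisfying the odevity conditions (η₁ even in y₂, η₂ odd in y₂), det(I + ∇η) = 1, and ‖∂₂η‖₂ ≤ δ, and for all smooth 2-periodic functions g, h : ℝ² → ℝ and every multi-index α = (α₁,α₂) with 1 ≤ |α| ≤ 2, one has ∫_{(-1,1)²} |∂^α η| |g| |h| dy ≤ c₀ ‖∂₂η‖_{|α|} ‖g‖₁ ‖h‖₀ if α₂ = 0, and ∫_{(-1,1)²} |∂^α η| |g| |h| dy ≤ c₀ ‖∂₂∂^α η‖₀ ‖g‖₁ ‖h‖₀ if α₂ ≠ 0. -/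
open MeasureTheory

noncomputable section

/-- A point of the plane `ℝ²`. -/
abbrev Pt := ℝ × ℝ

/-- The periodic cell `(-1,1)²`. -/
def cell : Set Pt := Set.Ioo (-1 : ℝ) 1 ×ˢ Set.Ioo (-1 : ℝ) 1

/-- `f` is 2-periodic in each variable. -/
def Periodic2 (f : Pt → ℝ) : Prop :=
  (∀ y : Pt, f (y.1 + 2, y.2) = f y) ∧ ∀ y : Pt, f (y.1, y.2 + 2) = f y

/-- Partial derivative in the first variable. -/
def p1 (f : Pt → ℝ) : Pt → ℝ := fun y => fderiv ℝ f y (1, 0)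

/-- Partial derivative in the second variable. -/
def p2 (f : Pt → ℝ) : Pt → ℝ := fun y => fderiv ℝ f y (0, 1)

/-- Iterated partial derivative `∂₁^a ∂₂^b f`. -/
def pd (a b : ℕ) (f : Pt → ℝ) : Pt → ℝ := p1^[a] (p2^[b] f)

/-- Square of the `L²((-1,1)²)` norm. -/
def L2sq (f : Pt → ℝ) : ℝ := ∫ y in cell, (f y) ^ 2

/-- The `L²((-1,1)²)` norm `‖f‖₀`. -/
def L2 (f : Pt → ℝ) : ℝ := Real.sqrt (L2sq f)

/-- Square of the Sobolev norm `‖f‖_i² = Σ_{|α| ≤ i} ‖∂^α f‖₀²`. -/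
def sobSq (i : ℕ) (f : Pt → ℝ) : ℝ :=
  ∑ a ∈ Finset.range (i + 1), ∑ b ∈ Finset.range (i + 1 - a), L2sq (pd a b f)

/-- The Sobolev norm `‖f‖_i`. -/
def sob (i : ℕ) (f : Pt → ℝ) : ℝ := Real.sqrt (sobSq i f)

/-- Square of the homogeneous seminorm `‖∇^i f‖₀² = Σ_{|α| = i} ‖∂^α f‖₀²`. -/
def gradSq (i : ℕ) (f : Pt → ℝ) : ℝ :=
  ∑ a ∈ Finset.range (i + 1), L2sq (pd a (i - a) f)

/-- First component of a map `ℝ² → ℝ²`. -/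
def comp1 (v : Pt → Pt) : Pt → ℝ := fun y => (v y).1

/-- Second component of a map `ℝ² → ℝ²`. -/
def comp2 (v : Pt → Pt) : Pt → ℝ := fun y => (v y).2

/-- The odevity conditions: the first component is even in `y₂`, the second is odd. -/
def Odev (v : Pt → Pt) : Prop :=
  ∀ y : Pt, (v (y.1, -y.2)).1 = (v y).1 ∧ (v (y.1, -y.2)).2 = -(v y).2

/-- The incompressibility condition `det(I + ∇η) = 1`. -/
def DetCond (η : Pt → Pt) : Prop :=
  ∀ y : Pt, (1 + p1 (comp1 η) y) * (1 + p2 (comp2 η) y)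
      - p2 (comp1 η) y * p1 (comp2 η) y = 1

/-- Sobolev norm `‖v‖_i` of a vector field (components summed). -/
def sobV (i : ℕ) (v : Pt → Pt) : ℝ := Real.sqrt (sobSq i (comp1 v) + sobSq i (comp2 v))

/-- The vector field `∂₂v`. -/
def d2V (v : Pt → Pt) : Pt → Pt := fun y => (p2 (comp1 v) y, p2 (comp2 v) y)

namespace S15

abbrev sm (f : Pt → ℝ) : Prop := ContDiff ℝ (⊤:ℕ∞) f

lemma sm_fderiv {f : Pt → ℝ} (hf : sm f) : ContDiff ℝ (⊤:ℕ∞) (fderiv ℝ f) :=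
  hf.fderiv_right (by exact_mod_cast le_rfl)

lemma sm_p1 {f : Pt → ℝ} (hf : sm f) : sm (p1 f) := (sm_fderiv hf).clm_apply contDiff_const

lemma sm_p2 {f : Pt → ℝ} (hf : sm f) : sm (p2 f) := (sm_fderiv hf).clm_apply contDiff_const

lemma diffAt {f : Pt → ℝ} (hf : sm f) (y : Pt) : DifferentiableAt ℝ f y :=
  (hf.differentiable (by simp)) y

lemma sm_p1_iter {f : Pt → ℝ} (hf : sm f) (a : ℕ) : sm (p1^[a] f) := by
  induction a generalizing f with
  | zero => exact hf
  | succ n ih => rw [Function.iterate_succ_apply]; exact ih (sm_p1 hf)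

lemma sm_p2_iter {f : Pt → ℝ} (hf : sm f) (b : ℕ) : sm (p2^[b] f) := by
  induction b generalizing f with
  | zero => exact hf
  | succ n ih => rw [Function.iterate_succ_apply]; exact ih (sm_p2 hf)

lemma sm_pd {f : Pt → ℝ} (hf : sm f) (a b : ℕ) : sm (pd a b f) :=
  sm_p1_iter (sm_p2_iter hf b) a

lemma hasDeriv1 {f : Pt → ℝ} (hf : sm f) (x t : ℝ) :
    HasDerivAt (fun s => f (s, t)) (p1 f (x, t)) x := by
  have h1 : HasDerivAt (fun s : ℝ => ((s, t) : Pt)) ((1:ℝ), (0:ℝ)) x :=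
    (hasDerivAt_id x).prodMk (hasDerivAt_const x t)
  exact (diffAt hf (x, t)).hasFDerivAt.comp_hasDerivAt x h1

lemma hasDeriv2 {f : Pt → ℝ} (hf : sm f) (x t : ℝ) :
    HasDerivAt (fun s => f (x, s)) (p2 f (x, t)) t := by
  have h1 : HasDerivAt (fun s : ℝ => ((x, s) : Pt)) ((0:ℝ), (1:ℝ)) t :=
    (hasDerivAt_const t x).prodMk (hasDerivAt_id t)
  exact (diffAt hf (x, t)).hasFDerivAt.comp_hasDerivAt t h1

lemma cont_slice2 {f : Pt → ℝ} (hf : Continuous f) (x : ℝ) :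
    Continuous (fun t => f (x, t)) := hf.comp (Continuous.prodMk_right x)

lemma cont_slice1 {f : Pt → ℝ} (hf : Continuous f) (t : ℝ) :
    Continuous (fun s => f (s, t)) := hf.comp (Continuous.prodMk_left t)

lemma integ2 {f : Pt → ℝ} (hf : sm f) (x a b : ℝ) :
    ∫ t in a..b, p2 f (x, t) = f (x, b) - f (x, a) :=
  intervalIntegral.integral_eq_sub_of_hasDerivAt (fun t _ => hasDeriv2 hf x t)
    ((cont_slice2 (sm_p2 hf).continuous x).intervalIntegrable a b)

lemma fderiv_period {f : Pt → ℝ} (hf : sm f) (v : Pt) (hp : ∀ y : Pt, f (y + v) = f y)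
    (y : Pt) : fderiv ℝ f (y + v) = fderiv ℝ f y := by
  have h : f = fun z => f (z + v) := funext fun z => (hp z).symm
  have hT : HasFDerivAt (fun z : Pt => z + v) (ContinuousLinearMap.id ℝ Pt) y :=
    (hasFDerivAt_id y).add_const v
  have hc := ((diffAt hf (y + v)).hasFDerivAt.comp y hT).fderiv
  conv_rhs => rw [h]
  rw [show (fun z => f (z + v)) = f ∘ (fun z => z + v) from rfl, hc,
    ContinuousLinearMap.comp_id]

lemma shift1 (y : Pt) : y + ((2:ℝ), (0:ℝ)) = (y.1 + 2, y.2) := by ext <;> simp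
lemma shift2 (y : Pt) : y + ((0:ℝ), (2:ℝ)) = (y.1, y.2 + 2) := by ext <;> simp

lemma per_p1 {f : Pt → ℝ} (hf : sm f) (hp : Periodic2 f) : Periodic2 (p1 f) := by
  constructor
  · intro y
    have := fderiv_period hf ((2:ℝ),(0:ℝ)) (fun z => by rw [shift1]; exact hp.1 z) y
    rw [shift1] at this
    simp only [p1, this]
  · intro y
    have := fderiv_period hf ((0:ℝ),(2:ℝ)) (fun z => by rw [shift2]; exact hp.2 z) y
    rw [shift2] at this
    simp only [p1, this]

lemma per_p2 {f : Pt → ℝ} (hf : sm f) (hp : Periodic2 f) : Periodic2 (p2 f) := by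
  constructor
  · intro y
    have := fderiv_period hf ((2:ℝ),(0:ℝ)) (fun z => by rw [shift1]; exact hp.1 z) y
    rw [shift1] at this
    simp only [p2, this]
  · intro y
    have := fderiv_period hf ((0:ℝ),(2:ℝ)) (fun z => by rw [shift2]; exact hp.2 z) y
    rw [shift2] at this
    simp only [p2, this]

/-- reflection in the second variable as a continuous linear map -/
def RR : Pt →L[ℝ] Pt := (ContinuousLinearMap.fst ℝ ℝ ℝ).prod (-(ContinuousLinearMap.snd ℝ ℝ ℝ))

lemma fderiv_reflect {f : Pt → ℝ} (hf : sm f) (y w : Pt) :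
    fderiv ℝ (fun z : Pt => f (z.1, -z.2)) y w = fderiv ℝ f (y.1, -y.2) (w.1, -w.2) := by
  have h : (fun z : Pt => f (z.1, -z.2)) = f ∘ RR := rfl
  have hc : fderiv ℝ (f ∘ RR) y = (fderiv ℝ f (RR y)).comp (fderiv ℝ RR y) :=
    fderiv_comp y (diffAt hf _) (RR.differentiableAt)
  rw [h, hc, RR.fderiv]
  rfl

def Even2 (f : Pt → ℝ) : Prop := ∀ y : Pt, f (y.1, -y.2) = f y
def Odd2 (f : Pt → ℝ) : Prop := ∀ y : Pt, f (y.1, -y.2) = -f y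

lemma p1_odd {f : Pt → ℝ} (hf : sm f) (ho : Odd2 f) : Odd2 (p1 f) := by
  intro y
  have h : (fun z : Pt => f (z.1, -z.2)) = fun z => -f z := funext ho
  have h2 := fderiv_reflect hf y (1, 0)
  rw [h] at h2
  have h3 : fderiv ℝ (fun z => -f z) y (1,0) = -(fderiv ℝ f y (1,0)) := by
    rw [fderiv_fun_neg]; rfl
  have h4 : ((1:ℝ), -(0:ℝ)) = ((1:ℝ), (0:ℝ)) := by norm_num
  rw [h4] at h2
  show fderiv ℝ f (y.1, -y.2) (1,0) = -(fderiv ℝ f y (1,0))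
  rw [← h2, h3]

lemma p2_even {f : Pt → ℝ} (hf : sm f) (he : Even2 f) : Odd2 (p2 f) := by
  intro y
  have h : (fun z : Pt => f (z.1, -z.2)) = f := funext he
  have h2 := fderiv_reflect hf y (0, 1)
  rw [h] at h2
  have h4 : ((0:ℝ), -(1:ℝ)) = -((0:ℝ), (1:ℝ)) := by norm_num
  rw [h4, map_neg] at h2
  show p2 f (y.1, -y.2) = - p2 f y
  have : p2 f y = - p2 f (y.1, -y.2) := h2
  linarith

lemma clm_deriv {f : Pt → ℝ} (hf : sm f) (v w : Pt) (y : Pt) :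
    fderiv ℝ (fun z => fderiv ℝ f z v) y w = fderiv ℝ (fderiv ℝ f) y w v := by
  have hd : DifferentiableAt ℝ (fderiv ℝ f) y :=
    ((sm_fderiv hf).differentiable (by simp)) y
  have h : (fun z => fderiv ℝ f z v) = (ContinuousLinearMap.apply ℝ ℝ v) ∘ (fderiv ℝ f) := rfl
  have hc := fderiv_comp y (ContinuousLinearMap.apply ℝ ℝ v).differentiableAt hd
  rw [h, hc, (ContinuousLinearMap.apply ℝ ℝ v).fderiv]
  rfl

lemma p1p2_comm {f : Pt → ℝ} (hf : sm f) : p1 (p2 f) = p2 (p1 f) := by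
  funext y
  have h1 := clm_deriv hf ((0:ℝ),(1:ℝ)) ((1:ℝ),(0:ℝ)) y
  have h2 := clm_deriv hf ((1:ℝ),(0:ℝ)) ((0:ℝ),(1:ℝ)) y
  have hd : DifferentiableAt ℝ (fderiv ℝ f) y :=
    ((sm_fderiv hf).differentiable (by simp)) y
  have hsym := second_derivative_symmetric (f := f) (f' := fderiv ℝ f)
    (f'' := fderiv ℝ (fderiv ℝ f) y) (fun z => (diffAt hf z).hasFDerivAt)
    hd.hasFDerivAt ((1:ℝ),(0:ℝ)) ((0:ℝ),(1:ℝ))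
  show fderiv ℝ (fun z => fderiv ℝ f z ((0:ℝ),(1:ℝ))) y (1,0)
      = fderiv ℝ (fun z => fderiv ℝ f z ((1:ℝ),(0:ℝ))) y (0,1)
  rw [h1, h2, hsym]

lemma p1_iter_p2_comm {f : Pt → ℝ} (hf : sm f) (a : ℕ) :
    p1^[a] (p2 f) = p2 (p1^[a] f) := by
  induction a generalizing f with
  | zero => rfl
  | succ n ih =>
    rw [Function.iterate_succ_apply, Function.iterate_succ_apply,
      p1p2_comm hf, ih (sm_p1 hf)]

lemma pd_succ {f : Pt → ℝ} (hf : sm f) (a b : ℕ) : pd a (b+1) f = p2 (pd a b f) := by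
  unfold pd
  rw [Function.iterate_succ_apply', p1_iter_p2_comm (sm_p2_iter hf b) a]

end S15
namespace S15

lemma measurable_cell : MeasurableSet cell :=
  (measurableSet_Ioo).prod (measurableSet_Ioo)

lemma cell_subset : cell ⊆ (Set.Icc (-1:ℝ) 1) ×ˢ (Set.Icc (-1:ℝ) 1) :=
  Set.prod_mono Set.Ioo_subset_Icc_self Set.Ioo_subset_Icc_self

lemma integrableOn_cell {f : Pt → ℝ} (hf : Continuous f) : IntegrableOn f cell :=
  (hf.continuousOn.integrableOn_compact (isCompact_Icc.prod isCompact_Icc)).mono_set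
    cell_subset

lemma L2sq_nonneg (f : Pt → ℝ) : 0 ≤ L2sq f :=
  MeasureTheory.setIntegral_nonneg measurable_cell (fun y _ => sq_nonneg _)

lemma L2_nonneg (f : Pt → ℝ) : 0 ≤ L2 f := Real.sqrt_nonneg _

lemma sobSq_nonneg (i : ℕ) (f : Pt → ℝ) : 0 ≤ sobSq i f :=
  Finset.sum_nonneg fun _ _ => Finset.sum_nonneg fun _ _ => L2sq_nonneg _

lemma sob_nonneg (i : ℕ) (f : Pt → ℝ) : 0 ≤ sob i f := Real.sqrt_nonneg _

lemma sobV_nonneg (i : ℕ) (v : Pt → Pt) : 0 ≤ sobV i v := Real.sqrt_nonneg _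

lemma L2sq_le_sobSq (f : Pt → ℝ) {i a b : ℕ} (ha : a < i + 1) (hb : b < i + 1 - a) :
    L2sq (pd a b f) ≤ sobSq i f := by
  calc L2sq (pd a b f)
      ≤ ∑ b' ∈ Finset.range (i + 1 - a), L2sq (pd a b' f) :=
        Finset.single_le_sum (f := fun b' => L2sq (pd a b' f))
          (fun _ _ => L2sq_nonneg _) (Finset.mem_range.2 hb)
    _ ≤ sobSq i f :=
        Finset.single_le_sum
          (f := fun a' => ∑ b' ∈ Finset.range (i + 1 - a'), L2sq (pd a' b' f))
          (fun a' _ => Finset.sum_nonneg fun _ _ => L2sq_nonneg _) (Finset.mem_range.2 ha)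

lemma L2sq_abs (f : Pt → ℝ) : L2sq (fun y => |f y|) = L2sq f := by
  unfold L2sq; congr 1; funext y; exact sq_abs _

/-- Cauchy–Schwarz for real integrals. -/
lemma cauchy_schwarz {α : Type*} [MeasurableSpace α] (μ : Measure α) (f g : α → ℝ)
    (hf2 : Integrable (fun a => f a ^ 2) μ) (hg2 : Integrable (fun a => g a ^ 2) μ)
    (hfg : Integrable (fun a => |f a| * |g a|) μ) :
    ∫ a, |f a| * |g a| ∂μ
      ≤ Real.sqrt (∫ a, f a ^ 2 ∂μ) * Real.sqrt (∫ a, g a ^ 2 ∂μ) := by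
  set A := ∫ a, f a ^ 2 ∂μ with hAdef
  set C := ∫ a, g a ^ 2 ∂μ with hCdef
  set B := ∫ a, |f a| * |g a| ∂μ with hBdef
  have hA : 0 ≤ A := integral_nonneg fun a => sq_nonneg _
  have hC : 0 ≤ C := integral_nonneg fun a => sq_nonneg _
  have hB : 0 ≤ B := integral_nonneg fun a => mul_nonneg (abs_nonneg _) (abs_nonneg _)
  have key : ∀ lam : ℝ, 0 ≤ A - 2 * lam * B + lam ^ 2 * C := by
    intro lam
    have h0 : 0 ≤ ∫ a, (|f a| - lam * |g a|) ^ 2 ∂μ := integral_nonneg fun a => sq_nonneg _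
    have heq : ∀ a, (|f a| - lam * |g a|) ^ 2
        = f a ^ 2 - 2 * lam * (|f a| * |g a|) + lam ^ 2 * g a ^ 2 := by
      intro a
      have h1 : |f a| ^ 2 = f a ^ 2 := sq_abs _
      have h2 : |g a| ^ 2 = g a ^ 2 := sq_abs _
      nlinarith [sq_nonneg (|f a| - lam * |g a|)]
    rw [show (fun a => (|f a| - lam * |g a|) ^ 2)
        = fun a => f a ^ 2 - 2 * lam * (|f a| * |g a|) + lam ^ 2 * g a ^ 2 from funext heq]
        at h0
    have i1 : Integrable (fun a => 2 * lam * (|f a| * |g a|)) μ := hfg.const_mul _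
    have i2 : Integrable (fun a => lam ^ 2 * g a ^ 2) μ := hg2.const_mul _
    have i3 : Integrable (fun a => f a ^ 2 - 2 * lam * (|f a| * |g a|)) μ := hf2.sub i1
    rw [integral_add i3 i2, integral_sub hf2 i1, integral_const_mul, integral_const_mul] at h0
    linarith
  rcases eq_or_lt_of_le hC with hC0 | hCpos
  · have hB0 : B ≤ 0 := by
      by_contra hb
      push_neg at hb
      have := key ((A + 1) / (2 * B))
      rw [← hC0] at this
      have h2 : 2 * ((A + 1) / (2 * B)) * B = A + 1 := by field_simp
      rw [h2] at this
      simp only [zero_mul, mul_zero, add_zero] at this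
      linarith
    have : B = 0 := le_antisymm hB0 hB
    rw [this]
    positivity
  · have h1 := key (B / C)
    have e1 : 2 * (B / C) * B = 2 * (B * B) / C := by ring
    have e2 : (B / C) ^ 2 * C = B * B / C := by field_simp
    rw [e1, e2] at h1
    have hBB : B * B ≤ A * C := by
      have hq : B * B / C ≤ A := by
        have he : A - 2 * (B * B) / C + B * B / C = A - B * B / C := by ring
        rw [he] at h1
        linarith
      exact (div_le_iff₀ hCpos).mp hq
    calc B = Real.sqrt (B * B) := by rw [Real.sqrt_mul_self hB]
      _ ≤ Real.sqrt (A * C) := Real.sqrt_le_sqrt hBB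
      _ = Real.sqrt A * Real.sqrt C := Real.sqrt_mul hA C

lemma cs_interval (u v : ℝ → ℝ) (hu : Continuous u) (hv : Continuous v) :
    ∫ t in (-1:ℝ)..1, |u t| * |v t|
      ≤ Real.sqrt (∫ t in (-1:ℝ)..1, u t ^ 2) * Real.sqrt (∫ t in (-1:ℝ)..1, v t ^ 2) := by
  rw [intervalIntegral.integral_of_le (by norm_num : (-1:ℝ) ≤ 1),
    intervalIntegral.integral_of_le (by norm_num : (-1:ℝ) ≤ 1),
    intervalIntegral.integral_of_le (by norm_num : (-1:ℝ) ≤ 1)]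
  exact cauchy_schwarz _ u v ((hu.pow 2).integrableOn_Ioc)
    ((hv.pow 2).integrableOn_Ioc) ((hu.abs.mul hv.abs).integrableOn_Ioc)

lemma interval_sq_nonneg (u : ℝ → ℝ) : 0 ≤ ∫ t in (-1:ℝ)..1, u t ^ 2 :=
  intervalIntegral.integral_nonneg (by norm_num) (fun t _ => sq_nonneg _)

lemma l1_le_l2_interval (u : ℝ → ℝ) (hu : Continuous u) :
    ∫ t in (-1:ℝ)..1, |u t| ≤ Real.sqrt 2 * Real.sqrt (∫ t in (-1:ℝ)..1, u t ^ 2) := by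
  have h := cs_interval u (fun _ => (1:ℝ)) hu continuous_const
  simp only [abs_one, mul_one, one_pow] at h
  rw [intervalIntegral.integral_const] at h
  norm_num at h
  linarith [h]

lemma cs_cell (u v : Pt → ℝ) (hu : Continuous u) (hv : Continuous v) :
    ∫ y in cell, |u y| * |v y| ≤ L2 u * L2 v :=
  cauchy_schwarz _ u v (integrableOn_cell (hu.pow 2)) (integrableOn_cell (hv.pow 2))
    (integrableOn_cell (hu.abs.mul hv.abs))

lemma volume_cell : (volume cell).toReal = 4 := by
  rw [show cell = (Set.Ioo (-1:ℝ) 1) ×ˢ (Set.Ioo (-1:ℝ) 1) from rfl,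
    MeasureTheory.Measure.volume_eq_prod, MeasureTheory.Measure.prod_prod,
    Real.volume_Ioo]
  norm_num

lemma l1_le_l2_cell (u : Pt → ℝ) (hu : Continuous u) :
    ∫ y in cell, |u y| ≤ 2 * L2 u := by
  have h := cs_cell u (fun _ => (1:ℝ)) hu continuous_const
  simp only [abs_one, mul_one] at h
  have h2 : L2 (fun _ : Pt => (1:ℝ)) = 2 := by
    unfold L2 L2sq
    simp only [one_pow]
    rw [MeasureTheory.setIntegral_const, measureReal_def, volume_cell]
    norm_num
  rw [h2] at h
  linarith

lemma ioo_eq_ii (u : ℝ → ℝ) : ∫ t in Set.Ioo (-1:ℝ) 1, u t = ∫ t in (-1:ℝ)..1, u t := by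
  rw [intervalIntegral.integral_of_le (by norm_num : (-1:ℝ) ≤ 1),
    MeasureTheory.integral_Ioc_eq_integral_Ioo]

lemma fubini_cell (F : Pt → ℝ) (hF : Continuous F) :
    ∫ y in cell, F y = ∫ x in Set.Ioo (-1:ℝ) 1, (∫ t in (-1:ℝ)..1, F (x, t)) := by
  have h1 : ∫ y in cell, F y
      = ∫ x in Set.Ioo (-1:ℝ) 1, (∫ t in Set.Ioo (-1:ℝ) 1, F (x, t)) := by
    rw [show cell = (Set.Ioo (-1:ℝ) 1) ×ˢ (Set.Ioo (-1:ℝ) 1) from rfl]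
    exact MeasureTheory.setIntegral_prod F (integrableOn_cell hF)
  rw [h1]
  congr 1
  funext x
  exact ioo_eq_ii _

lemma fubini_cell_swap (F : Pt → ℝ) (hF : Continuous F) :
    ∫ y in cell, F y = ∫ t in Set.Ioo (-1:ℝ) 1, (∫ x in (-1:ℝ)..1, F (x, t)) := by
  have hint : Integrable F ((volume.restrict (Set.Ioo (-1:ℝ) 1)).prod
      (volume.restrict (Set.Ioo (-1:ℝ) 1))) := by
    rw [MeasureTheory.Measure.prod_restrict]
    exact integrableOn_cell hF
  have h1 : ∫ y in cell, F y = ∫ z, F z ∂((volume.restrict (Set.Ioo (-1:ℝ) 1)).prod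
      (volume.restrict (Set.Ioo (-1:ℝ) 1))) := by
    rw [MeasureTheory.Measure.prod_restrict]
    rfl
  rw [h1, MeasureTheory.integral_prod_symm F hint]
  congr 1
  funext t
  exact ioo_eq_ii _

lemma cont_param (F : Pt → ℝ) (hF : Continuous F) :
    Continuous fun x => ∫ t in (-1:ℝ)..1, F (x, t) := by
  apply intervalIntegral.continuous_parametric_intervalIntegral_of_continuous'
  exact hF.comp (continuous_fst.prodMk continuous_snd)

lemma exists_le_avg (u : ℝ → ℝ) (hu : Continuous u) :
    ∃ s ∈ Set.Icc (-1:ℝ) 1, u s ≤ (1/2) * ∫ t in (-1:ℝ)..1, u t := by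
  obtain ⟨s, hs, hle⟩ := MeasureTheory.exists_le_setAverage (μ := volume)
    (s := Set.Icc (-1:ℝ) 1) (f := u)
    (by rw [Real.volume_Icc]; norm_num)
    (by rw [Real.volume_Icc]; exact ENNReal.ofReal_ne_top)
    (hu.integrableOn_Icc)
  refine ⟨s, hs, ?_⟩
  rw [MeasureTheory.setAverage_eq, measureReal_def, Real.volume_Icc] at hle
  rw [intervalIntegral.integral_of_le (by norm_num : (-1:ℝ) ≤ 1),
    ← MeasureTheory.integral_Icc_eq_integral_Ioc]
  have : (ENNReal.ofReal (1 - (-1))).toReal = 2 := by norm_num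
  rw [this] at hle
  simpa [smul_eq_mul, one_div] using hle

lemma exists_avg_le (u : ℝ → ℝ) (hu : Continuous u) :
    ∃ s ∈ Set.Icc (-1:ℝ) 1, (1/2) * (∫ t in (-1:ℝ)..1, u t) ≤ u s := by
  obtain ⟨s, hs, hle⟩ := MeasureTheory.exists_setAverage_le (μ := volume)
    (s := Set.Icc (-1:ℝ) 1) (f := u)
    (by rw [Real.volume_Icc]; norm_num)
    (by rw [Real.volume_Icc]; exact ENNReal.ofReal_ne_top)
    (hu.integrableOn_Icc)
  refine ⟨s, hs, ?_⟩
  rw [MeasureTheory.setAverage_eq, measureReal_def, Real.volume_Icc] at hle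
  rw [intervalIntegral.integral_of_le (by norm_num : (-1:ℝ) ≤ 1),
    ← MeasureTheory.integral_Icc_eq_integral_Ioc]
  have : (ENNReal.ofReal (1 - (-1))).toReal = 2 := by norm_num
  rw [this] at hle
  simpa [smul_eq_mul, one_div] using hle

lemma abs_sub_le_integral_deriv (u u' : ℝ → ℝ) (hd : ∀ t, HasDerivAt u (u' t) t)
    (hu' : Continuous u') {s x : ℝ} (hs : s ∈ Set.Icc (-1:ℝ) 1)
    (hx : x ∈ Set.Icc (-1:ℝ) 1) :
    |u x - u s| ≤ ∫ t in (-1:ℝ)..1, |u' t| := by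
  have ftc : ∫ t in s..x, u' t = u x - u s :=
    intervalIntegral.integral_eq_sub_of_hasDerivAt (fun t _ => hd t)
      (hu'.intervalIntegrable s x)
  rw [← ftc]
  rcases le_total s x with h | h
  · calc |∫ t in s..x, u' t| ≤ ∫ t in s..x, |u' t| :=
          intervalIntegral.abs_integral_le_integral_abs h
      _ ≤ ∫ t in (-1:ℝ)..1, |u' t| :=
          intervalIntegral.integral_mono_interval hs.1 h hx.2
            (Filter.Eventually.of_forall fun t => abs_nonneg _)
            (hu'.abs.intervalIntegrable _ _)
  · rw [intervalIntegral.integral_symm, abs_neg]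
    calc |∫ t in x..s, u' t| ≤ ∫ t in x..s, |u' t| :=
          intervalIntegral.abs_integral_le_integral_abs h
      _ ≤ ∫ t in (-1:ℝ)..1, |u' t| :=
          intervalIntegral.integral_mono_interval hx.1 h hs.2
            (Filter.Eventually.of_forall fun t => abs_nonneg _)
            (hu'.abs.intervalIntegrable _ _)

lemma sup1d (u u' : ℝ → ℝ) (hd : ∀ t, HasDerivAt u (u' t) t) (hu' : Continuous u')
    {x : ℝ} (hx : x ∈ Set.Icc (-1:ℝ) 1) :
    |u x| ≤ (1/2) * (∫ t in (-1:ℝ)..1, |u t|) + ∫ t in (-1:ℝ)..1, |u' t| := by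
  have hu : Continuous u := by
    have : Differentiable ℝ u := fun t => (hd t).differentiableAt
    exact this.continuous
  obtain ⟨s, hs, hle⟩ := exists_le_avg (fun t => |u t|) hu.abs
  have h2 := abs_sub_le_integral_deriv u u' hd hu' hs hx
  calc |u x| = |u s + (u x - u s)| := by rw [show u s + (u x - u s) = u x from by ring]
    _ ≤ |u s| + |u x - u s| := abs_add_le _ _
    _ ≤ (1/2) * (∫ t in (-1:ℝ)..1, |u t|) + ∫ t in (-1:ℝ)..1, |u' t| :=
        add_le_add hle h2

lemma sup1d_mean0 (u u' : ℝ → ℝ) (hd : ∀ t, HasDerivAt u (u' t) t) (hu' : Continuous u')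
    (hmean : ∫ t in (-1:ℝ)..1, u t = 0) {x : ℝ} (hx : x ∈ Set.Icc (-1:ℝ) 1) :
    |u x| ≤ ∫ t in (-1:ℝ)..1, |u' t| := by
  have hu : Continuous u := by
    have : Differentiable ℝ u := fun t => (hd t).differentiableAt
    exact this.continuous
  obtain ⟨s1, hs1, h1⟩ := exists_le_avg u hu
  obtain ⟨s2, hs2, h2⟩ := exists_avg_le u hu
  rw [hmean] at h1 h2
  norm_num at h1 h2
  rcases le_or_gt 0 (u x) with hsign | hsign
  · have hb := abs_sub_le_integral_deriv u u' hd hu' hs1 hx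
    rw [abs_of_nonneg hsign]
    calc u x ≤ u x - u s1 := by linarith
      _ ≤ |u x - u s1| := le_abs_self _
      _ ≤ _ := hb
  · have hb := abs_sub_le_integral_deriv u u' hd hu' hs2 hx
    rw [abs_of_neg hsign]
    calc -u x ≤ u s2 - u x := by linarith
      _ ≤ |u x - u s2| := by rw [abs_sub_comm]; exact le_abs_self _
      _ ≤ _ := hb

end S15
namespace S15

lemma mem_cell_1 {y : Pt} (hy : y ∈ cell) : y.1 ∈ Set.Icc (-1:ℝ) 1 :=
  Set.Ioo_subset_Icc_self hy.1
lemma mem_cell_2 {y : Pt} (hy : y ∈ cell) : y.2 ∈ Set.Icc (-1:ℝ) 1 :=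
  Set.Ioo_subset_Icc_self hy.2

lemma integrableOn_Ioo1 {v : ℝ → ℝ} (hv : Continuous v) :
    IntegrableOn v (Set.Ioo (-1:ℝ) 1) :=
  hv.integrableOn_Icc.mono_set Set.Ioo_subset_Icc_self

lemma cont_param' (F : Pt → ℝ) (hF : Continuous F) :
    Continuous fun t => ∫ s in (-1:ℝ)..1, F (s, t) :=
  cont_param (fun z => F (z.2, z.1)) (hF.comp (continuous_snd.prodMk continuous_fst))

lemma slice2_sup {f : Pt → ℝ} (hf : sm f) {y : Pt} (hy : y.2 ∈ Set.Icc (-1:ℝ) 1) :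
    |f y| ≤ (1/2) * (∫ t in (-1:ℝ)..1, |f (y.1, t)|) + ∫ t in (-1:ℝ)..1, |p2 f (y.1, t)| := by
  have h := sup1d (fun t => f (y.1, t)) (fun t => p2 f (y.1, t))
    (fun t => hasDeriv2 hf y.1 t) (cont_slice2 (sm_p2 hf).continuous y.1) hy
  simpa using h

lemma slice1_sup {f : Pt → ℝ} (hf : sm f) {y : Pt} (hy : y.1 ∈ Set.Icc (-1:ℝ) 1) :
    |f y| ≤ (1/2) * (∫ s in (-1:ℝ)..1, |f (s, y.2)|) + ∫ s in (-1:ℝ)..1, |p1 f (s, y.2)| := by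
  have h := sup1d (fun s => f (s, y.2)) (fun s => p1 f (s, y.2))
    (fun s => hasDeriv1 hf s y.2) (cont_slice1 (sm_p1 hf).continuous y.2) hy
  simpa using h

lemma slice2_mean0_per {F : Pt → ℝ} (hF : sm F) (hper : ∀ z : Pt, F (z.1, z.2 + 2) = F z)
    {y : Pt} (hy : y.2 ∈ Set.Icc (-1:ℝ) 1) :
    |p2 F y| ≤ ∫ t in (-1:ℝ)..1, |p2 (p2 F) (y.1, t)| := by
  have hmean : ∫ t in (-1:ℝ)..1, p2 F (y.1, t) = 0 := by
    rw [integ2 hF]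
    have h := hper (y.1, -1)
    norm_num at h
    rw [h, sub_self]
  have h := sup1d_mean0 (fun t => p2 F (y.1, t)) (fun t => p2 (p2 F) (y.1, t))
    (fun t => hasDeriv2 (sm_p2 hF) y.1 t) (cont_slice2 (sm_p2 (sm_p2 hF)).continuous y.1)
    hmean hy
  simpa using h

lemma slice2_mean0_odd {F : Pt → ℝ} (hF : sm F) (hodd : Odd2 F)
    {y : Pt} (hy : y.2 ∈ Set.Icc (-1:ℝ) 1) :
    |F y| ≤ ∫ t in (-1:ℝ)..1, |p2 F (y.1, t)| := by
  have hmean : ∫ t in (-1:ℝ)..1, F (y.1, t) = 0 := by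
    have h1 : ∫ t in (-1:ℝ)..1, F (y.1, -t) = ∫ t in (-1:ℝ)..1, F (y.1, t) := by
      have := intervalIntegral.integral_comp_neg (a := (-1:ℝ)) (b := 1)
        (fun t => F (y.1, t))
      rw [this, neg_neg]
    have h2 : (fun t => F (y.1, -t)) = fun t => -F (y.1, t) := by
      funext t
      exact hodd (y.1, t)
    rw [h2, intervalIntegral.integral_neg] at h1
    linarith
  have h := sup1d_mean0 (fun t => F (y.1, t)) (fun t => p2 F (y.1, t))
    (fun t => hasDeriv2 hF y.1 t) (cont_slice2 (sm_p2 hF).continuous y.1) hmean hy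
  simpa using h

lemma swap_l1 (v : Pt → ℝ) (hv : Continuous v) :
    ∫ t in (-1:ℝ)..1, (∫ s in (-1:ℝ)..1, |v (s, t)|) = ∫ z in cell, |v z| := by
  rw [fubini_cell_swap (fun z => |v z|) hv.abs, ← ioo_eq_ii]

/-- Elementary two-dimensional sup bound. -/
lemma sup2d {u : Pt → ℝ} (hu : sm u) {y : Pt} (hy1 : y.1 ∈ Set.Icc (-1:ℝ) 1)
    (hy2 : y.2 ∈ Set.Icc (-1:ℝ) 1) :
    |u y| ≤ (1/2) * L2 u + L2 (p1 u) + L2 (p2 u) + 2 * L2 (p1 (p2 u)) := by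
  have h1 := slice2_sup hu hy2
  have hA : ∀ t : ℝ, |u (y.1, t)|
      ≤ (1/2) * (∫ s in (-1:ℝ)..1, |u (s, t)|) + ∫ s in (-1:ℝ)..1, |p1 u (s, t)| :=
    fun t => slice1_sup hu (y := (y.1, t)) hy1
  have hB : ∀ t : ℝ, |p2 u (y.1, t)|
      ≤ (1/2) * (∫ s in (-1:ℝ)..1, |p2 u (s, t)|) + ∫ s in (-1:ℝ)..1, |p1 (p2 u) (s, t)| :=
    fun t => slice1_sup (sm_p2 hu) (y := (y.1, t)) hy1
  have cA1 : Continuous fun t => ∫ s in (-1:ℝ)..1, |u (s, t)| :=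
    cont_param' _ hu.continuous.abs
  have cA2 : Continuous fun t => ∫ s in (-1:ℝ)..1, |p1 u (s, t)| :=
    cont_param' _ (sm_p1 hu).continuous.abs
  have cB1 : Continuous fun t => ∫ s in (-1:ℝ)..1, |p2 u (s, t)| :=
    cont_param' _ (sm_p2 hu).continuous.abs
  have cB2 : Continuous fun t => ∫ s in (-1:ℝ)..1, |p1 (p2 u) (s, t)| :=
    cont_param' _ (sm_p1 (sm_p2 hu)).continuous.abs
  have hAint : ∫ t in (-1:ℝ)..1, |u (y.1, t)|
      ≤ (1/2) * (∫ z in cell, |u z|) + ∫ z in cell, |p1 u z| := by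
    calc ∫ t in (-1:ℝ)..1, |u (y.1, t)|
        ≤ ∫ t in (-1:ℝ)..1, ((1/2) * (∫ s in (-1:ℝ)..1, |u (s, t)|)
            + ∫ s in (-1:ℝ)..1, |p1 u (s, t)|) := by
          apply intervalIntegral.integral_mono_on (by norm_num)
            ((cont_slice2 hu.continuous.abs y.1).intervalIntegrable _ _)
            (((continuous_const.mul cA1).add cA2).intervalIntegrable _ _)
          exact fun t _ => hA t
      _ = (1/2) * (∫ z in cell, |u z|) + ∫ z in cell, |p1 u z| := by
          rw [intervalIntegral.integral_add ((continuous_const.fun_mul cA1).intervalIntegrable _ _)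
            (cA2.intervalIntegrable _ _), intervalIntegral.integral_const_mul,
            swap_l1 u hu.continuous, swap_l1 (p1 u) (sm_p1 hu).continuous]
  have hBint : ∫ t in (-1:ℝ)..1, |p2 u (y.1, t)|
      ≤ (1/2) * (∫ z in cell, |p2 u z|) + ∫ z in cell, |p1 (p2 u) z| := by
    calc ∫ t in (-1:ℝ)..1, |p2 u (y.1, t)|
        ≤ ∫ t in (-1:ℝ)..1, ((1/2) * (∫ s in (-1:ℝ)..1, |p2 u (s, t)|)
            + ∫ s in (-1:ℝ)..1, |p1 (p2 u) (s, t)|) := by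
          apply intervalIntegral.integral_mono_on (by norm_num)
            ((cont_slice2 (sm_p2 hu).continuous.abs y.1).intervalIntegrable _ _)
            (((continuous_const.mul cB1).add cB2).intervalIntegrable _ _)
          exact fun t _ => hB t
      _ = (1/2) * (∫ z in cell, |p2 u z|) + ∫ z in cell, |p1 (p2 u) z| := by
          rw [intervalIntegral.integral_add ((continuous_const.fun_mul cB1).intervalIntegrable _ _)
            (cB2.intervalIntegrable _ _), intervalIntegral.integral_const_mul,
            swap_l1 (p2 u) (sm_p2 hu).continuous,
            swap_l1 (p1 (p2 u)) (sm_p1 (sm_p2 hu)).continuous]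
  have e1 := l1_le_l2_cell u hu.continuous
  have e2 := l1_le_l2_cell (p1 u) (sm_p1 hu).continuous
  have e3 := l1_le_l2_cell (p2 u) (sm_p2 hu).continuous
  have e4 := l1_le_l2_cell (p1 (p2 u)) (sm_p1 (sm_p2 hu)).continuous
  have n2 : 0 ≤ ∫ z in cell, |p1 u z| :=
    MeasureTheory.setIntegral_nonneg measurable_cell fun z _ => abs_nonneg _
  linarith

end S15
namespace S15

lemma sobSq_one (f : Pt → ℝ) :
    sobSq 1 f = L2sq f + L2sq (p2 f) + L2sq (p1 f) := by
  have h : sobSq 1 f = L2sq (pd 0 0 f) + L2sq (pd 0 1 f) + L2sq (pd 1 0 f) := by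
    simp [sobSq, Finset.sum_range_succ]
  exact h.trans rfl

lemma slice_g_bound {g : Pt → ℝ} (hg : sm g) {x : ℝ} (hx : x ∈ Set.Icc (-1:ℝ) 1) :
    ∫ t in (-1:ℝ)..1, g (x, t) ^ 2 ≤ 2 * sobSq 1 g := by
  set G : ℝ → ℝ := fun x' => ∫ t in (-1:ℝ)..1, g (x', t) ^ 2 with hGdef
  have hGcont : Continuous G := cont_param _ (hg.continuous.pow 2)
  obtain ⟨s, hs, hle⟩ := exists_le_avg G hGcont
  have hGint : ∫ x' in (-1:ℝ)..1, G x' = L2sq g := by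
    rw [show L2sq g = ∫ y in cell, (fun z => g z ^ 2) y from rfl,
      fubini_cell _ (hg.continuous.fun_pow 2), ← ioo_eq_ii]
  have hdiff : ∀ t : ℝ, |g (x, t) ^ 2 - g (s, t) ^ 2|
      ≤ ∫ u in (-1:ℝ)..1, |2 * g (u, t) * p1 g (u, t)| := by
    intro t
    apply abs_sub_le_integral_deriv (fun u => g (u, t) ^ 2)
      (fun u => 2 * g (u, t) * p1 g (u, t)) ?_ ?_ hs hx
    · intro u
      have h := (hasDeriv1 hg u t).fun_pow 2
      simpa using h
    · exact (continuous_const.mul (cont_slice1 hg.continuous t)).mul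
        (cont_slice1 (sm_p1 hg).continuous t)
  have hcont2 : Continuous fun t => ∫ u in (-1:ℝ)..1, |2 * g (u, t) * p1 g (u, t)| :=
    cont_param' _ ((continuous_const.mul hg.continuous).mul (sm_p1 hg).continuous).abs
  have hGx : G x - G s ≤ ∫ z in cell, |2 * g z * p1 g z| := by
    have e1 : G x - G s = ∫ t in (-1:ℝ)..1, (g (x, t) ^ 2 - g (s, t) ^ 2) := by
      rw [intervalIntegral.integral_sub ((cont_slice2 (hg.continuous.fun_pow 2) x).intervalIntegrable _ _)
        ((cont_slice2 (hg.continuous.fun_pow 2) s).intervalIntegrable _ _)]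
    calc G x - G s = ∫ t in (-1:ℝ)..1, (g (x, t) ^ 2 - g (s, t) ^ 2) := e1
      _ ≤ |∫ t in (-1:ℝ)..1, (g (x, t) ^ 2 - g (s, t) ^ 2)| := le_abs_self _
      _ ≤ ∫ t in (-1:ℝ)..1, |g (x, t) ^ 2 - g (s, t) ^ 2| :=
          intervalIntegral.abs_integral_le_integral_abs (by norm_num)
      _ ≤ ∫ t in (-1:ℝ)..1, (∫ u in (-1:ℝ)..1, |2 * g (u, t) * p1 g (u, t)|) := by
          apply intervalIntegral.integral_mono_on (by norm_num)
            (((cont_slice2 (hg.continuous.pow 2) x).sub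
              (cont_slice2 (hg.continuous.pow 2) s)).abs.intervalIntegrable _ _)
            (hcont2.intervalIntegrable _ _)
          exact fun t _ => hdiff t
      _ = ∫ z in cell, |2 * g z * p1 g z| :=
          swap_l1 _ ((continuous_const.mul hg.continuous).mul (sm_p1 hg).continuous)
  have hprod : ∫ z in cell, |2 * g z * p1 g z| ≤ L2sq g + L2sq (p1 g) := by
    have e : ∀ z : Pt, |2 * g z * p1 g z| = 2 * (|g z| * |p1 g z|) := by
      intro z
      rw [abs_mul, abs_mul]
      norm_num
      ring
    rw [show (fun z => |2 * g z * p1 g z|) = fun z => 2 * (|g z| * |p1 g z|) from funext e]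
    rw [MeasureTheory.integral_const_mul]
    have hcs := cs_cell g (p1 g) hg.continuous (sm_p1 hg).continuous
    have h1 : 2 * (L2 g * L2 (p1 g)) ≤ L2 g ^ 2 + L2 (p1 g) ^ 2 := by nlinarith [sq_nonneg (L2 g - L2 (p1 g))]
    have h2 : L2 g ^ 2 = L2sq g := Real.sq_sqrt (L2sq_nonneg g)
    have h3 : L2 (p1 g) ^ 2 = L2sq (p1 g) := Real.sq_sqrt (L2sq_nonneg (p1 g))
    linarith
  have hGs : G s ≤ (1/2) * L2sq g := by rw [← hGint]; exact hle
  have hfin : G x ≤ (1/2) * L2sq g + L2sq g + L2sq (p1 g) := by linarith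
  have hpos : 0 ≤ L2sq (p2 g) := L2sq_nonneg _
  rw [sobSq_one]
  calc G x ≤ (1/2) * L2sq g + L2sq g + L2sq (p1 g) := hfin
    _ ≤ 2 * (L2sq g + L2sq (p2 g) + L2sq (p1 g)) := by nlinarith [L2sq_nonneg g, L2sq_nonneg (p1 g)]

/-- The master product estimate. -/
lemma master {φ w g h : Pt → ℝ} (hφ : Continuous φ) (hw : Continuous w)
    (hg : sm g) (hh : Continuous h) (hw0 : ∀ y : Pt, 0 ≤ w y)
    (hb : ∀ y ∈ cell, |φ y| ≤ ∫ t in (-1:ℝ)..1, w (y.1, t)) :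
    ∫ y in cell, |φ y| * |g y| * |h y| ≤ 2 * L2 w * sob 1 g * L2 h := by
  set M : ℝ → ℝ := fun x => ∫ t in (-1:ℝ)..1, w (x, t) with hMdef
  have hMcont : Continuous M := cont_param _ hw
  have hM0 : ∀ x, 0 ≤ M x := fun x =>
    intervalIntegral.integral_nonneg (by norm_num) (fun t _ => hw0 _)
  set G : ℝ → ℝ := fun x => Real.sqrt (∫ t in (-1:ℝ)..1, g (x, t) ^ 2) with hGdef
  set H : ℝ → ℝ := fun x => Real.sqrt (∫ t in (-1:ℝ)..1, h (x, t) ^ 2) with hHdef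
  have hGcont : Continuous G := (cont_param _ (hg.continuous.pow 2)).sqrt
  have hHcont : Continuous H := (cont_param _ (hh.pow 2)).sqrt
  have hG0 : ∀ x, 0 ≤ G x := fun x => Real.sqrt_nonneg _
  have hH0 : ∀ x, 0 ≤ H x := fun x => Real.sqrt_nonneg _
  set Sg : ℝ := Real.sqrt (2 * sobSq 1 g) with hSgdef
  have hSg0 : 0 ≤ Sg := Real.sqrt_nonneg _
  -- step 1: pointwise bound on cell
  have step1 : ∫ y in cell, |φ y| * |g y| * |h y|
      ≤ ∫ y in cell, M y.1 * (|g y| * |h y|) := by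
    apply MeasureTheory.setIntegral_mono_on
      (integrableOn_cell ((hφ.abs.mul hg.continuous.abs).mul hh.abs))
      (integrableOn_cell ((hMcont.comp continuous_fst).mul
        (hg.continuous.abs.mul hh.abs)))
      measurable_cell
    intro y hy
    rw [mul_assoc]
    exact mul_le_mul_of_nonneg_right (hb y hy)
      (mul_nonneg (abs_nonneg _) (abs_nonneg _))
  -- step 2: Fubini
  have step2 : ∫ y in cell, M y.1 * (|g y| * |h y|)
      = ∫ x in Set.Ioo (-1:ℝ) 1, M x * ∫ t in (-1:ℝ)..1, |g (x, t)| * |h (x, t)| := by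
    rw [fubini_cell (fun y => M y.1 * (|g y| * |h y|))
      ((hMcont.comp continuous_fst).mul (hg.continuous.abs.mul hh.abs))]
    congr 1
    funext x
    show (∫ t in (-1:ℝ)..1, M x * (|g (x, t)| * |h (x, t)|))
        = M x * ∫ t in (-1:ℝ)..1, |g (x, t)| * |h (x, t)|
    rw [intervalIntegral.integral_const_mul]
  -- step 3: CS in t and G bound
  have step3 : ∀ x ∈ Set.Ioo (-1:ℝ) 1,
      M x * ∫ t in (-1:ℝ)..1, |g (x, t)| * |h (x, t)| ≤ Sg * (M x * H x) := by
    intro x hxIoo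
    have hx : x ∈ Set.Icc (-1:ℝ) 1 := Set.Ioo_subset_Icc_self hxIoo
    have hcs := cs_interval (fun t => g (x, t)) (fun t => h (x, t))
      (cont_slice2 hg.continuous x) (cont_slice2 hh x)
    have hGle : G x ≤ Sg := Real.sqrt_le_sqrt (slice_g_bound hg hx)
    calc M x * ∫ t in (-1:ℝ)..1, |g (x, t)| * |h (x, t)|
        ≤ M x * (G x * H x) := by
          apply mul_le_mul_of_nonneg_left _ (hM0 x)
          exact hcs
      _ ≤ Sg * (M x * H x) := by
          have : M x * (G x * H x) = G x * (M x * H x) := by ring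
          rw [this]
          exact mul_le_mul_of_nonneg_right hGle (mul_nonneg (hM0 x) (hH0 x))
  have step3' : ∫ x in Set.Ioo (-1:ℝ) 1, M x * ∫ t in (-1:ℝ)..1, |g (x, t)| * |h (x, t)|
      ≤ ∫ x in Set.Ioo (-1:ℝ) 1, Sg * (M x * H x) := by
    apply MeasureTheory.setIntegral_mono_on
      (integrableOn_Ioo1 (hMcont.mul (cont_param _ (hg.continuous.abs.mul hh.abs))))
      (integrableOn_Ioo1 (continuous_const.mul (hMcont.mul hHcont)))
      measurableSet_Ioo step3
  -- step 5: pull out Sg and CS in x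
  have step5 : ∫ x in Set.Ioo (-1:ℝ) 1, Sg * (M x * H x)
      ≤ Sg * (Real.sqrt (2 * L2sq w) * Real.sqrt (L2sq h)) := by
    rw [MeasureTheory.integral_const_mul]
    apply mul_le_mul_of_nonneg_left _ hSg0
    have hMH : ∫ x in Set.Ioo (-1:ℝ) 1, M x * H x
        ≤ Real.sqrt (∫ x in (-1:ℝ)..1, M x ^ 2) * Real.sqrt (∫ x in (-1:ℝ)..1, H x ^ 2) := by
      rw [ioo_eq_ii]
      have := cs_interval M H hMcont hHcont
      have he : ∀ x : ℝ, |M x| * |H x| = M x * H x := fun x => by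
        rw [abs_of_nonneg (hM0 x), abs_of_nonneg (hH0 x)]
      rw [show (fun x => |M x| * |H x|) = fun x => M x * H x from funext he] at this
      exact this
    have hM2 : ∫ x in (-1:ℝ)..1, M x ^ 2 ≤ 2 * L2sq w := by
      have hptw : ∀ x : ℝ, M x ^ 2 ≤ 2 * ∫ t in (-1:ℝ)..1, w (x, t) ^ 2 := by
        intro x
        have h1 : M x ≤ Real.sqrt 2 * Real.sqrt (∫ t in (-1:ℝ)..1, w (x, t) ^ 2) := by
          have := l1_le_l2_interval (fun t => w (x, t)) (cont_slice2 hw x)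
          have he : ∀ t : ℝ, |w (x, t)| = w (x, t) := fun t => abs_of_nonneg (hw0 _)
          rw [show (fun t => |w (x, t)|) = fun t => w (x, t) from funext he] at this
          exact this
        have h2 : 0 ≤ ∫ t in (-1:ℝ)..1, w (x, t) ^ 2 := interval_sq_nonneg _
        nlinarith [hM0 x, Real.sq_sqrt h2, Real.sq_sqrt (by norm_num : (0:ℝ) ≤ 2),
          Real.sqrt_nonneg (∫ t in (-1:ℝ)..1, w (x, t) ^ 2), Real.sqrt_nonneg (2:ℝ)]
      calc ∫ x in (-1:ℝ)..1, M x ^ 2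
          ≤ ∫ x in (-1:ℝ)..1, (2 * ∫ t in (-1:ℝ)..1, w (x, t) ^ 2) := by
            apply intervalIntegral.integral_mono_on (by norm_num)
              ((hMcont.pow 2).intervalIntegrable _ _)
              ((continuous_const.mul (cont_param _ (hw.pow 2))).intervalIntegrable _ _)
            exact fun x _ => hptw x
        _ = 2 * L2sq w := by
            rw [intervalIntegral.integral_const_mul]
            congr 1
            rw [show L2sq w = ∫ y in cell, (fun z => w z ^ 2) y from rfl,
              fubini_cell _ (hw.fun_pow 2), ← ioo_eq_ii]
    have hH2 : ∫ x in (-1:ℝ)..1, H x ^ 2 = L2sq h := by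
      have he : ∀ x : ℝ, H x ^ 2 = ∫ t in (-1:ℝ)..1, h (x, t) ^ 2 := fun x =>
        Real.sq_sqrt (interval_sq_nonneg _)
      rw [show (fun x => H x ^ 2) = fun x => ∫ t in (-1:ℝ)..1, h (x, t) ^ 2 from funext he]
      rw [show L2sq h = ∫ y in cell, (fun z => h z ^ 2) y from rfl,
        fubini_cell _ (hh.fun_pow 2), ← ioo_eq_ii]
    calc ∫ x in Set.Ioo (-1:ℝ) 1, M x * H x
        ≤ Real.sqrt (∫ x in (-1:ℝ)..1, M x ^ 2) * Real.sqrt (∫ x in (-1:ℝ)..1, H x ^ 2) := hMH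
      _ ≤ Real.sqrt (2 * L2sq w) * Real.sqrt (L2sq h) := by
          apply mul_le_mul (Real.sqrt_le_sqrt hM2) (le_of_eq (by rw [hH2]))
            (Real.sqrt_nonneg _) (Real.sqrt_nonneg _)
  -- combine
  have final : Sg * (Real.sqrt (2 * L2sq w) * Real.sqrt (L2sq h))
      = 2 * L2 w * sob 1 g * L2 h := by
    rw [hSgdef, Real.sqrt_mul (by norm_num : (0:ℝ) ≤ 2) (sobSq 1 g),
      Real.sqrt_mul (by norm_num : (0:ℝ) ≤ 2) (L2sq w)]
    unfold L2 sob
    rw [show Real.sqrt 2 * Real.sqrt (sobSq 1 g)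
          * (Real.sqrt 2 * Real.sqrt (L2sq w) * Real.sqrt (L2sq h))
        = (Real.sqrt 2 * Real.sqrt 2)
          * (Real.sqrt (L2sq w) * Real.sqrt (sobSq 1 g) * Real.sqrt (L2sq h)) from by ring,
      Real.mul_self_sqrt (by norm_num : (0:ℝ) ≤ 2)]
    ring
  calc ∫ y in cell, |φ y| * |g y| * |h y|
      ≤ ∫ y in cell, M y.1 * (|g y| * |h y|) := step1
    _ = _ := step2
    _ ≤ _ := step3'
    _ ≤ _ := step5
    _ = _ := final

end S15
namespace S15

lemma per_pd {f : Pt → ℝ} (hf : sm f) (hp : Periodic2 f) (a b : ℕ) :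
    Periodic2 (pd a b f) := by
  have h2 : ∀ b : ℕ, ∀ {f : Pt → ℝ}, sm f → Periodic2 f → Periodic2 (p2^[b] f) := by
    intro b
    induction b with
    | zero => intro f _ hp; exact hp
    | succ n ih =>
      intro f hf hp
      rw [Function.iterate_succ_apply]
      exact ih (sm_p2 hf) (per_p2 hf hp)
  have h1 : ∀ a : ℕ, ∀ {f : Pt → ℝ}, sm f → Periodic2 f → Periodic2 (p1^[a] f) := by
    intro a
    induction a with
    | zero => intro f _ hp; exact hp
    | succ n ih =>
      intro f hf hp
      rw [Function.iterate_succ_apply]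
      exact ih (sm_p1 hf) (per_p1 hf hp)
  exact h1 a (sm_p2_iter hf b) (h2 b hf hp)

lemma tri3 (x1 x2 x3 : ℝ) : |x1 + x2 + x3| ≤ |x1| + |x2| + |x3| :=
  (abs_add_le _ _).trans (add_le_add_left (abs_add_le _ _) _)

lemma sqrt_two_le_two : Real.sqrt 2 ≤ 2 := by
  nlinarith [Real.sq_sqrt (by norm_num : (0:ℝ) ≤ 2), Real.sqrt_nonneg 2]

lemma sqrt_add_sqrt_le {a b : ℝ} (ha : 0 ≤ a) (hb : 0 ≤ b) :
    Real.sqrt a + Real.sqrt b ≤ Real.sqrt 2 * Real.sqrt (a + b) := by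
  have h1 : Real.sqrt a ^ 2 = a := Real.sq_sqrt ha
  have h2 : Real.sqrt b ^ 2 = b := Real.sq_sqrt hb
  have h3 : Real.sqrt 2 ^ 2 = 2 := Real.sq_sqrt (by norm_num)
  have h4 : Real.sqrt (a + b) ^ 2 = a + b := Real.sq_sqrt (by linarith)
  have key : (Real.sqrt a + Real.sqrt b) ^ 2 ≤ (Real.sqrt 2 * Real.sqrt (a + b)) ^ 2 := by
    have : 2 * Real.sqrt a * Real.sqrt b ≤ a + b := by
      nlinarith [sq_nonneg (Real.sqrt a - Real.sqrt b)]
    nlinarith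
  calc Real.sqrt a + Real.sqrt b
      = Real.sqrt ((Real.sqrt a + Real.sqrt b) ^ 2) :=
        (Real.sqrt_sq (by positivity)).symm
    _ ≤ Real.sqrt ((Real.sqrt 2 * Real.sqrt (a + b)) ^ 2) := Real.sqrt_le_sqrt key
    _ = Real.sqrt 2 * Real.sqrt (a + b) := Real.sqrt_sq (by positivity)

lemma sqrt_sq_add_sq_le (x y : ℝ) : Real.sqrt (x ^ 2 + y ^ 2) ≤ |x| + |y| := by
  have h : x ^ 2 + y ^ 2 ≤ (|x| + |y|) ^ 2 := by
    nlinarith [abs_nonneg x, abs_nonneg y, sq_abs x, sq_abs y]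
  calc Real.sqrt (x ^ 2 + y ^ 2) ≤ Real.sqrt ((|x| + |y|) ^ 2) := Real.sqrt_le_sqrt h
    _ = |x| + |y| := Real.sqrt_sq (by positivity)

lemma split_two {φ1 φ2 g h : Pt → ℝ} (h1 : Continuous φ1) (h2 : Continuous φ2)
    (hg : Continuous g) (hh : Continuous h) :
    ∫ y in cell, Real.sqrt (φ1 y ^ 2 + φ2 y ^ 2) * |g y| * |h y|
      ≤ (∫ y in cell, |φ1 y| * |g y| * |h y|)
        + ∫ y in cell, |φ2 y| * |g y| * |h y| := by
  have hc1 : Continuous fun y => Real.sqrt (φ1 y ^ 2 + φ2 y ^ 2) :=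
    ((h1.pow 2).add (h2.pow 2)).sqrt
  calc ∫ y in cell, Real.sqrt (φ1 y ^ 2 + φ2 y ^ 2) * |g y| * |h y|
      ≤ ∫ y in cell, (|φ1 y| * |g y| * |h y| + |φ2 y| * |g y| * |h y|) := by
        apply MeasureTheory.setIntegral_mono_on
          (integrableOn_cell ((hc1.mul hg.abs).mul hh.abs))
          (integrableOn_cell (((h1.abs.mul hg.abs).mul hh.abs).add
            ((h2.abs.mul hg.abs).mul hh.abs)))
          measurable_cell
        intro y _
        have := sqrt_sq_add_sq_le (φ1 y) (φ2 y)
        have hgh : 0 ≤ |g y| * |h y| := mul_nonneg (abs_nonneg _) (abs_nonneg _)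
        calc Real.sqrt (φ1 y ^ 2 + φ2 y ^ 2) * |g y| * |h y|
            = Real.sqrt (φ1 y ^ 2 + φ2 y ^ 2) * (|g y| * |h y|) := by ring
          _ ≤ (|φ1 y| + |φ2 y|) * (|g y| * |h y|) :=
              mul_le_mul_of_nonneg_right this hgh
          _ = |φ1 y| * |g y| * |h y| + |φ2 y| * |g y| * |h y| := by ring
      _ = _ := by
        apply MeasureTheory.integral_add
          (integrableOn_cell ((h1.abs.mul hg.abs).mul hh.abs))
          (integrableOn_cell ((h2.abs.mul hg.abs).mul hh.abs))

lemma L2_add_le {u v : Pt → ℝ} (hu : Continuous u) (hv : Continuous v) :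
    L2 (fun y => u y + v y) ≤ L2 u + L2 v := by
  have hsq : L2sq (fun y => u y + v y) ≤ (L2 u + L2 v) ^ 2 := by
    have e : ∀ y : Pt, (u y + v y) ^ 2 = u y ^ 2 + 2 * (u y * v y) + v y ^ 2 := by
      intro y; ring
    have hcs : ∫ y in cell, u y * v y ≤ L2 u * L2 v := by
      calc ∫ y in cell, u y * v y ≤ ∫ y in cell, |u y| * |v y| := by
            apply MeasureTheory.setIntegral_mono_on
              (integrableOn_cell (hu.mul hv))
              (integrableOn_cell (hu.abs.mul hv.abs)) measurable_cell
            intro y _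
            calc u y * v y ≤ |u y * v y| := le_abs_self _
              _ = |u y| * |v y| := abs_mul _ _
        _ ≤ L2 u * L2 v := cs_cell u v hu hv
    have heq : L2sq (fun y => u y + v y)
        = L2sq u + 2 * (∫ y in cell, u y * v y) + L2sq v := by
      unfold L2sq
      rw [show (fun y => ((fun z => u z + v z) y) ^ 2)
          = fun y => u y ^ 2 + 2 * (u y * v y) + v y ^ 2 from funext e]
      have i1 : IntegrableOn (fun y => 2 * (u y * v y)) cell :=
        integrableOn_cell (continuous_const.mul (hu.mul hv))
      have i2 : IntegrableOn (fun y => u y ^ 2 + 2 * (u y * v y)) cell :=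
        (integrableOn_cell (hu.pow 2)).add i1
      rw [MeasureTheory.integral_add i2 (integrableOn_cell (hv.fun_pow 2)),
        MeasureTheory.integral_add (integrableOn_cell (hu.fun_pow 2)) i1,
        MeasureTheory.integral_const_mul]
    have h2u : L2 u ^ 2 = L2sq u := Real.sq_sqrt (L2sq_nonneg u)
    have h2v : L2 v ^ 2 = L2sq v := Real.sq_sqrt (L2sq_nonneg v)
    nlinarith [heq, hcs]
  calc L2 (fun y => u y + v y) = Real.sqrt (L2sq (fun y => u y + v y)) := rfl
    _ ≤ Real.sqrt ((L2 u + L2 v) ^ 2) := Real.sqrt_le_sqrt hsq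
    _ = L2 u + L2 v := Real.sqrt_sq (add_nonneg (L2_nonneg u) (L2_nonneg v))

lemma L2_cabs (c : ℝ) (hc : 0 ≤ c) (X : Pt → ℝ) :
    L2 (fun z => c * |X z|) = c * L2 X := by
  unfold L2 L2sq
  have e : ∀ z : Pt, (c * |X z|) ^ 2 = c ^ 2 * X z ^ 2 := by
    intro z
    rw [mul_pow, sq_abs]
  rw [show (fun y => ((fun z => c * |X z|) y) ^ 2) = fun y => c ^ 2 * X y ^ 2 from
    funext e, MeasureTheory.integral_const_mul, Real.sqrt_mul (sq_nonneg c),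
    Real.sqrt_sq hc]

lemma L2_abs (X : Pt → ℝ) : L2 (fun z => |X z|) = L2 X := by
  have := L2_cabs 1 (by norm_num) X
  simpa using this

lemma L2_le_sobV1 {v : Pt → Pt} {a b i : ℕ} (ha : a < i + 1) (hb : b < i + 1 - a) :
    L2 (pd a b (comp1 v)) ≤ sobV i v := by
  unfold L2 sobV
  apply Real.sqrt_le_sqrt
  calc L2sq (pd a b (comp1 v)) ≤ sobSq i (comp1 v) := L2sq_le_sobSq _ ha hb
    _ ≤ sobSq i (comp1 v) + sobSq i (comp2 v) :=
        le_add_of_nonneg_right (sobSq_nonneg _ _)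

lemma L2_le_sobV2 {v : Pt → Pt} {a b i : ℕ} (ha : a < i + 1) (hb : b < i + 1 - a) :
    L2 (pd a b (comp2 v)) ≤ sobV i v := by
  unfold L2 sobV
  apply Real.sqrt_le_sqrt
  calc L2sq (pd a b (comp2 v)) ≤ sobSq i (comp2 v) := L2sq_le_sobSq _ ha hb
    _ ≤ sobSq i (comp1 v) + sobSq i (comp2 v) :=
        le_add_of_nonneg_left (sobSq_nonneg _ _)

/-- sup bound for an odd function in terms of derivatives of `p2 u`. -/
lemma sup_odd {u : Pt → ℝ} (hu : sm u) (hodd : Odd2 u) {y : Pt}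
    (hy1 : y.1 ∈ Set.Icc (-1:ℝ) 1) (hy2 : y.2 ∈ Set.Icc (-1:ℝ) 1) :
    |u y| ≤ L2 (p2 u) + 2 * L2 (p1 (p2 u)) := by
  have h1 := slice2_mean0_odd hu hodd hy2
  have hB : ∀ t : ℝ, |p2 u (y.1, t)|
      ≤ (1/2) * (∫ s in (-1:ℝ)..1, |p2 u (s, t)|) + ∫ s in (-1:ℝ)..1, |p1 (p2 u) (s, t)| :=
    fun t => slice1_sup (sm_p2 hu) (y := (y.1, t)) hy1
  have cB1 : Continuous fun t => ∫ s in (-1:ℝ)..1, |p2 u (s, t)| :=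
    cont_param' _ (sm_p2 hu).continuous.abs
  have cB2 : Continuous fun t => ∫ s in (-1:ℝ)..1, |p1 (p2 u) (s, t)| :=
    cont_param' _ (sm_p1 (sm_p2 hu)).continuous.abs
  have hBint : ∫ t in (-1:ℝ)..1, |p2 u (y.1, t)|
      ≤ (1/2) * (∫ z in cell, |p2 u z|) + ∫ z in cell, |p1 (p2 u) z| := by
    calc ∫ t in (-1:ℝ)..1, |p2 u (y.1, t)|
        ≤ ∫ t in (-1:ℝ)..1, ((1/2) * (∫ s in (-1:ℝ)..1, |p2 u (s, t)|)
            + ∫ s in (-1:ℝ)..1, |p1 (p2 u) (s, t)|) := by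
          apply intervalIntegral.integral_mono_on (by norm_num)
            ((cont_slice2 (sm_p2 hu).continuous.abs y.1).intervalIntegrable _ _)
            (((continuous_const.mul cB1).add cB2).intervalIntegrable _ _)
          exact fun t _ => hB t
      _ = (1/2) * (∫ z in cell, |p2 u z|) + ∫ z in cell, |p1 (p2 u) z| := by
          rw [intervalIntegral.integral_add ((continuous_const.fun_mul cB1).intervalIntegrable _ _)
            (cB2.intervalIntegrable _ _), intervalIntegral.integral_const_mul,
            swap_l1 (p2 u) (sm_p2 hu).continuous,
            swap_l1 (p1 (p2 u)) (sm_p1 (sm_p2 hu)).continuous]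
  have e3 := l1_le_l2_cell (p2 u) (sm_p2 hu).continuous
  have e4 := l1_le_l2_cell (p1 (p2 u)) (sm_p1 (sm_p2 hu)).continuous
  linarith

/-- pointwise bound for `pd a b f` with `b ≥ 1` via the mean-zero trick. -/
lemma pd_mean0_bound {f : Pt → ℝ} (hf : sm f) (hper : Periodic2 f) (a b' : ℕ)
    {y : Pt} (hy : y ∈ cell) :
    |pd a (b' + 1) f y| ≤ ∫ t in (-1:ℝ)..1, |pd a (b' + 1 + 1) f (y.1, t)| := by
  rw [pd_succ hf a b']
  have e : pd a (b' + 1 + 1) f = p2 (p2 (pd a b' f)) := by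
    rw [show b' + 1 + 1 = (b' + 1) + 1 from rfl, pd_succ hf a (b' + 1), pd_succ hf a b']
  rw [e]
  exact slice2_mean0_per (sm_pd hf a b') (per_pd hf hper a b').2 (mem_cell_2 hy)

end S15
namespace S15

lemma ii_comb2 (c1 c2 : ℝ) {u1 u2 : ℝ → ℝ} (h1 : Continuous u1) (h2 : Continuous u2) :
    ∫ t in (-1:ℝ)..1, (c1 * |u1 t| + c2 * |u2 t|)
      = c1 * (∫ t in (-1:ℝ)..1, |u1 t|) + c2 * (∫ t in (-1:ℝ)..1, |u2 t|) := by
  rw [intervalIntegral.integral_add ((continuous_const.fun_mul h1.abs).intervalIntegrable _ _)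
    ((continuous_const.fun_mul h2.abs).intervalIntegrable _ _),
    intervalIntegral.integral_const_mul, intervalIntegral.integral_const_mul]

lemma ii_comb3 (c1 c2 c3 : ℝ) {u1 u2 u3 : ℝ → ℝ} (h1 : Continuous u1)
    (h2 : Continuous u2) (h3 : Continuous u3) :
    ∫ t in (-1:ℝ)..1, (c1 * |u1 t| + c2 * |u2 t| + c3 * |u3 t|)
      = c1 * (∫ t in (-1:ℝ)..1, |u1 t|) + c2 * (∫ t in (-1:ℝ)..1, |u2 t|)
        + c3 * (∫ t in (-1:ℝ)..1, |u3 t|) := by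
  rw [intervalIntegral.integral_add
    (((continuous_const.fun_mul h1.abs).fun_add (continuous_const.fun_mul h2.abs)).intervalIntegrable _ _)
    ((continuous_const.fun_mul h3.abs).intervalIntegrable _ _),
    ii_comb2 c1 c2 h1 h2, intervalIntegral.integral_const_mul]

end S15


open S15

set_option maxHeartbeats 1000000

/-- product estimates: there are constants `δ ∈ (0,1]`, `c₀ > 0`
such that for every smooth 2-periodic map `η` satisfying the odevity conditions,
`det(I + ∇η) = 1` and `‖∂₂η‖₂ ≤ δ`, and all smooth 2-periodic `g, h` and every
multi-index `α = (a, b)` with `1 ≤ a + b ≤ 2`: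
`∫ |∂^α η||g||h| ≤ c₀‖∂₂η‖_{|α|}‖g‖₁‖h‖₀` if `b = 0`, and
`∫ |∂^α η||g||h| ≤ c₀‖∂₂∂^α η‖₀‖g‖₁‖h‖₀` if `b ≠ 0`. -/
theorem statement15 :
    ∃ δ c₀ : ℝ, 0 < δ ∧ δ ≤ 1 ∧ 0 < c₀ ∧
      ∀ η : Pt → Pt, ContDiff ℝ (⊤ : ℕ∞) η →
        Periodic2 (comp1 η) → Periodic2 (comp2 η) → Odev η → DetCond η →
        sobV 2 (d2V η) ≤ δ →
        ∀ g h : Pt → ℝ, ContDiff ℝ (⊤ : ℕ∞) g → ContDiff ℝ (⊤ : ℕ∞) h →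
          Periodic2 g → Periodic2 h →
          ∀ a b : ℕ, 1 ≤ a + b → a + b ≤ 2 →
            (b = 0 →
              (∫ y in cell,
                  Real.sqrt ((pd a b (comp1 η) y) ^ 2 + (pd a b (comp2 η) y) ^ 2)
                    * |g y| * |h y|)
                ≤ c₀ * sobV (a + b) (d2V η) * sob 1 g * L2 h) ∧
            (b ≠ 0 →
              (∫ y in cell,
                  Real.sqrt ((pd a b (comp1 η) y) ^ 2 + (pd a b (comp2 η) y) ^ 2)
                    * |g y| * |h y|)
                ≤ c₀ * Real.sqrt (L2sq (pd a (b + 1) (comp1 η))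
                      + L2sq (pd a (b + 1) (comp2 η)))
                    * sob 1 g * L2 h) := by
  refine ⟨1/100, 100, by norm_num, by norm_num, by norm_num, ?_⟩
  intro η hη hper1 hper2 hodev hdet hsmall g h hg hh hpg hph a b hab1 hab2
  have hgsm : sm g := hg
  have hhc : Continuous h := hh.continuous
  have he1 : sm (comp1 η) := contDiff_fst.comp hη
  have he2 : sm (comp2 η) := contDiff_snd.comp hη
  have hev1 : Even2 (comp1 η) := fun y => (hodev y).1
  have hod2 : Odd2 (comp2 η) := fun y => (hodev y).2
  have hκ20 : 0 ≤ sobV 2 (d2V η) := sobV_nonneg _ _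
  have hκ10 : 0 ≤ sobV 1 (d2V η) := sobV_nonneg _ _
  have hsob0 : 0 ≤ sob 1 g := sob_nonneg _ _
  have hL2h0 : 0 ≤ L2 h := L2_nonneg _
  set A := p1 (comp1 η) with hAdef
  set B := p2 (comp1 η) with hBdef
  set C := p1 (comp2 η) with hCdef
  set D := p2 (comp2 η) with hDdef
  have hsA : sm A := sm_p1 he1
  have hsB : sm B := sm_p2 he1
  have hsC : sm C := sm_p1 he2
  have hsD : sm D := sm_p2 he2
  -- L2 bounds by Sobolev norms
  have rD10 : L2 (p1 D) ≤ sobV 2 (d2V η) := by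
    have e : pd 1 0 (comp2 (d2V η)) = p1 D := rfl
    rw [← e]; exact L2_le_sobV2 (by norm_num) (by norm_num)
  have rD01 : L2 (p2 D) ≤ sobV 2 (d2V η) := by
    have e : pd 0 1 (comp2 (d2V η)) = p2 D := rfl
    rw [← e]; exact L2_le_sobV2 (by norm_num) (by norm_num)
  have rD11 : L2 (p1 (p2 D)) ≤ sobV 2 (d2V η) := by
    have e : pd 1 1 (comp2 (d2V η)) = p1 (p2 D) := rfl
    rw [← e]; exact L2_le_sobV2 (by norm_num) (by norm_num)
  have rD20 : L2 (p1 (p1 D)) ≤ sobV 2 (d2V η) := by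
    have e : pd 2 0 (comp2 (d2V η)) = p1 (p1 D) := rfl
    rw [← e]; exact L2_le_sobV2 (by norm_num) (by norm_num)
  have rD00 : L2 D ≤ sobV 2 (d2V η) := by
    have e : pd 0 0 (comp2 (d2V η)) = D := rfl
    rw [← e]; exact L2_le_sobV2 (by norm_num) (by norm_num)
  have rB00 : L2 B ≤ sobV 2 (d2V η) := by
    have e : pd 0 0 (comp1 (d2V η)) = B := rfl
    rw [← e]; exact L2_le_sobV1 (by norm_num) (by norm_num)
  have rB10 : L2 (p1 B) ≤ sobV 2 (d2V η) := by
    have e : pd 1 0 (comp1 (d2V η)) = p1 B := rfl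
    rw [← e]; exact L2_le_sobV1 (by norm_num) (by norm_num)
  have rB01 : L2 (p2 B) ≤ sobV 2 (d2V η) := by
    have e : pd 0 1 (comp1 (d2V η)) = p2 B := rfl
    rw [← e]; exact L2_le_sobV1 (by norm_num) (by norm_num)
  have rB11 : L2 (p1 (p2 B)) ≤ sobV 2 (d2V η) := by
    have e : pd 1 1 (comp1 (d2V η)) = p1 (p2 B) := rfl
    rw [← e]; exact L2_le_sobV1 (by norm_num) (by norm_num)
  have sD10 : L2 (p1 D) ≤ sobV 1 (d2V η) := by
    have e : pd 1 0 (comp2 (d2V η)) = p1 D := rfl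
    rw [← e]; exact L2_le_sobV2 (by norm_num) (by norm_num)
  have sD01 : L2 (p2 D) ≤ sobV 1 (d2V η) := by
    have e : pd 0 1 (comp2 (d2V η)) = p2 D := rfl
    rw [← e]; exact L2_le_sobV2 (by norm_num) (by norm_num)
  -- global sup bounds
  have hsupD : ∀ y : Pt, y.1 ∈ Set.Icc (-1:ℝ) 1 → y.2 ∈ Set.Icc (-1:ℝ) 1 →
      |D y| ≤ 9/2 * sobV 2 (d2V η) := by
    intro y h1 h2
    have hs := sup2d hsD h1 h2
    linarith
  have hsupB : ∀ y : Pt, y.1 ∈ Set.Icc (-1:ℝ) 1 → y.2 ∈ Set.Icc (-1:ℝ) 1 →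
      |B y| ≤ 9/2 * sobV 2 (d2V η) := by
    intro y h1 h2
    have hs := sup2d hsB h1 h2
    linarith
  have hcomm2 : p2 C = p1 D := (p1p2_comm he2).symm
  have hcomm1 : p2 A = p1 B := (p1p2_comm he1).symm
  have hsupC : ∀ y : Pt, y.1 ∈ Set.Icc (-1:ℝ) 1 → y.2 ∈ Set.Icc (-1:ℝ) 1 →
      |C y| ≤ 3 * sobV 2 (d2V η) := by
    intro y h1 h2
    have hs := sup_odd hsC (p1_odd he2 hod2) h1 h2
    rw [hcomm2] at hs
    linarith
  have hsupA : ∀ y : Pt, y.1 ∈ Set.Icc (-1:ℝ) 1 → y.2 ∈ Set.Icc (-1:ℝ) 1 →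
      |A y| ≤ 2 * |D y| + 2 * (|B y| * |C y|) := by
    intro y h1 h2
    have hid := hdet y
    have hAe : A y = -(D y) + -(A y * D y) + B y * C y := by linear_combination hid
    have htri : |A y| ≤ |D y| + |A y| * |D y| + |B y| * |C y| := by
      calc |A y| = |(-(D y)) + -(A y * D y) + B y * C y| := by rw [← hAe]
        _ ≤ |(-(D y))| + |(-(A y * D y))| + |B y * C y| := tri3 _ _ _
        _ = |D y| + |A y| * |D y| + |B y| * |C y| := by
            rw [abs_neg, abs_neg, abs_mul, abs_mul]
    have hD2 : |D y| ≤ 1/2 := by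
      have := hsupD y h1 h2
      nlinarith
    nlinarith [mul_le_mul_of_nonneg_left hD2 (abs_nonneg (A y))]
  have hsupA1 : ∀ y : Pt, y.1 ∈ Set.Icc (-1:ℝ) 1 → y.2 ∈ Set.Icc (-1:ℝ) 1 →
      |A y| ≤ 1 := by
    intro y h1 h2
    have h0 := hsupA y h1 h2
    have hDs := hsupD y h1 h2
    have hBs := hsupB y h1 h2
    have hCs := hsupC y h1 h2
    nlinarith [abs_nonneg (B y), abs_nonneg (C y), abs_nonneg (D y)]
  -- pointwise integral bounds
  have pbD : ∀ y ∈ cell, |D y| ≤ ∫ t in (-1:ℝ)..1, |p2 D (y.1, t)| := by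
    intro y hy
    exact slice2_mean0_per he2 hper2.2 (mem_cell_2 hy)
  have pbC : ∀ y ∈ cell, |C y| ≤ ∫ t in (-1:ℝ)..1, |p1 D (y.1, t)| := by
    intro y hy
    have hb := slice2_mean0_odd hsC (p1_odd he2 hod2) (mem_cell_2 hy)
    rw [hcomm2] at hb
    exact hb
  constructor
  · -- case b = 0
    intro hb0
    subst hb0
    have ha1 : a = 1 ∨ a = 2 := by omega
    rcases ha1 with rfl | rfl
    · -- a = 1
      show (∫ y in cell,
          Real.sqrt ((pd 1 0 (comp1 η) y) ^ 2 + (pd 1 0 (comp2 η) y) ^ 2)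
            * |g y| * |h y|)
        ≤ 100 * sobV 1 (d2V η) * sob 1 g * L2 h
      set w1 : Pt → ℝ := fun z => 2 * |p2 D z| + 1 * |p1 D z| with hw1def
      set w2 : Pt → ℝ := fun z => |p1 D z| with hw2def
      have hw1c : Continuous w1 :=
        (continuous_const.mul (sm_p2 hsD).continuous.abs).add
          (continuous_const.mul (sm_p1 hsD).continuous.abs)
      have hw2c : Continuous w2 := (sm_p1 hsD).continuous.abs
      have hb1 : ∀ y ∈ cell, |pd 1 0 (comp1 η) y| ≤ ∫ t in (-1:ℝ)..1, w1 (y.1, t) := by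
        intro y hy
        have hy1 := mem_cell_1 hy
        have hy2 := mem_cell_2 hy
        have hAb : |A y| ≤ 2 * |D y| + 1 * |C y| := by
          have h0 := hsupA y hy1 hy2
          have hB2 : |B y| ≤ 1/2 := by
            have := hsupB y hy1 hy2
            nlinarith
          nlinarith [abs_nonneg (C y), abs_nonneg (B y)]
        have hDp := pbD y hy
        have hCp := pbC y hy
        show |A y| ≤ _
        calc |A y| ≤ 2 * |D y| + 1 * |C y| := hAb
          _ ≤ 2 * (∫ t in (-1:ℝ)..1, |p2 D (y.1, t)|)
              + 1 * (∫ t in (-1:ℝ)..1, |p1 D (y.1, t)|) := by linarith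
          _ = ∫ t in (-1:ℝ)..1, w1 (y.1, t) :=
              (ii_comb2 2 1 (cont_slice2 (sm_p2 hsD).continuous y.1)
                (cont_slice2 (sm_p1 hsD).continuous y.1)).symm
      have hb2 : ∀ y ∈ cell, |pd 1 0 (comp2 η) y| ≤ ∫ t in (-1:ℝ)..1, w2 (y.1, t) := by
        intro y hy
        exact pbC y hy
      have hw10 : ∀ z : Pt, 0 ≤ w1 z := fun z =>
        add_nonneg (mul_nonneg (by norm_num) (abs_nonneg _))
          (mul_nonneg (by norm_num) (abs_nonneg _))
      have hw20 : ∀ z : Pt, 0 ≤ w2 z := fun z => abs_nonneg _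
      have m1 := master (φ := pd 1 0 (comp1 η)) (w := w1)
        (sm_pd he1 1 0).continuous hw1c hgsm hhc hw10 hb1
      have m2 := master (φ := pd 1 0 (comp2 η)) (w := w2)
        (sm_pd he2 1 0).continuous hw2c hgsm hhc hw20 hb2
      have lw1 : L2 w1 ≤ 3 * sobV 1 (d2V η) := by
        rw [hw1def]
        calc L2 (fun z => 2 * |p2 D z| + 1 * |p1 D z|)
            ≤ L2 (fun z => 2 * |p2 D z|) + L2 (fun z => 1 * |p1 D z|) :=
              L2_add_le (continuous_const.mul (sm_p2 hsD).continuous.abs)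
                (continuous_const.mul (sm_p1 hsD).continuous.abs)
          _ = 2 * L2 (p2 D) + 1 * L2 (p1 D) := by
              rw [L2_cabs 2 (by norm_num), L2_cabs 1 (by norm_num)]
          _ ≤ 3 * sobV 1 (d2V η) := by linarith
      have lw2 : L2 w2 ≤ sobV 1 (d2V η) := by
        rw [hw2def, L2_abs]
        exact sD10
      calc (∫ y in cell,
          Real.sqrt ((pd 1 0 (comp1 η) y) ^ 2 + (pd 1 0 (comp2 η) y) ^ 2)
            * |g y| * |h y|)
          ≤ (∫ y in cell, |pd 1 0 (comp1 η) y| * |g y| * |h y|)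
            + ∫ y in cell, |pd 1 0 (comp2 η) y| * |g y| * |h y| :=
            split_two (sm_pd he1 1 0).continuous (sm_pd he2 1 0).continuous
              hg.continuous hhc
        _ ≤ 2 * L2 w1 * sob 1 g * L2 h + 2 * L2 w2 * sob 1 g * L2 h := add_le_add m1 m2
        _ = (2 * L2 w1 + 2 * L2 w2) * (sob 1 g * L2 h) := by ring
        _ ≤ (100 * sobV 1 (d2V η)) * (sob 1 g * L2 h) := by
            apply mul_le_mul_of_nonneg_right _ (mul_nonneg hsob0 hL2h0)
            linarith
        _ = 100 * sobV 1 (d2V η) * sob 1 g * L2 h := by ring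
    · -- a = 2
      show (∫ y in cell,
          Real.sqrt ((pd 2 0 (comp1 η) y) ^ 2 + (pd 2 0 (comp2 η) y) ^ 2)
            * |g y| * |h y|)
        ≤ 100 * sobV 2 (d2V η) * sob 1 g * L2 h
      have hA'id : ∀ y : Pt, p1 A y * (1 + D y)
          = -(p1 D y) * (1 + A y) + p1 B y * C y + B y * p1 C y := by
        intro y
        have hzero : (fun x => A (x, y.2) + D (x, y.2) + A (x, y.2) * D (x, y.2)
            - B (x, y.2) * C (x, y.2)) = fun _ : ℝ => (0:ℝ) := by
          funext x
          linear_combination hdet (x, y.2)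
        have hder : HasDerivAt (fun x => A (x, y.2) + D (x, y.2) + A (x, y.2) * D (x, y.2)
            - B (x, y.2) * C (x, y.2))
            (p1 A (y.1, y.2) + p1 D (y.1, y.2)
              + (p1 A (y.1, y.2) * D (y.1, y.2) + A (y.1, y.2) * p1 D (y.1, y.2))
              - (p1 B (y.1, y.2) * C (y.1, y.2) + B (y.1, y.2) * p1 C (y.1, y.2))) y.1 :=
          (((hasDeriv1 hsA y.1 y.2).add (hasDeriv1 hsD y.1 y.2)).add
            ((hasDeriv1 hsA y.1 y.2).mul (hasDeriv1 hsD y.1 y.2))).sub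
            ((hasDeriv1 hsB y.1 y.2).mul (hasDeriv1 hsC y.1 y.2))
        rw [hzero] at hder
        have h0 := hder.unique (hasDerivAt_const y.1 0)
        simp only [Prod.mk.eta] at h0
        linear_combination h0
      have pbp1D : ∀ y ∈ cell, |p1 D y| ≤ ∫ t in (-1:ℝ)..1, |p1 (p2 D) (y.1, t)| := by
        intro y hy
        have hb := slice2_mean0_per hsC (per_p1 he2 hper2).2 (mem_cell_2 hy)
        rw [hcomm2] at hb
        rw [show p2 (p1 D) = p1 (p2 D) from (p1p2_comm hsD).symm] at hb
        exact hb
      have pbp1B : ∀ y ∈ cell, |p1 B y| ≤ ∫ t in (-1:ℝ)..1, |p1 (p2 B) (y.1, t)| := by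
        intro y hy
        have hb := slice2_mean0_per hsA (per_p1 he1 hper1).2 (mem_cell_2 hy)
        rw [hcomm1] at hb
        rw [show p2 (p1 B) = p1 (p2 B) from (p1p2_comm hsB).symm] at hb
        exact hb
      have pbp1C : ∀ y ∈ cell, |p1 C y| ≤ ∫ t in (-1:ℝ)..1, |p1 (p1 D) (y.1, t)| := by
        intro y hy
        have hb := slice2_mean0_odd (sm_p1 hsC) (p1_odd hsC (p1_odd he2 hod2))
          (mem_cell_2 hy)
        rw [show p2 (p1 C) = p1 (p2 C) from (p1p2_comm hsC).symm, hcomm2] at hb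
        exact hb
      set w1 : Pt → ℝ := fun z => 4 * |p1 (p2 D) z| + 2 * |p1 (p2 B) z|
          + 2 * |p1 (p1 D) z| with hw1def
      set w2 : Pt → ℝ := fun z => |p1 (p1 D) z| with hw2def
      have hc1 : Continuous (p1 (p2 D)) := (sm_p1 (sm_p2 hsD)).continuous
      have hc2 : Continuous (p1 (p2 B)) := (sm_p1 (sm_p2 hsB)).continuous
      have hc3 : Continuous (p1 (p1 D)) := (sm_p1 (sm_p1 hsD)).continuous
      have hw1c : Continuous w1 :=
        ((continuous_const.mul hc1.abs).add (continuous_const.mul hc2.abs)).add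
          (continuous_const.mul hc3.abs)
      have hw2c : Continuous w2 := hc3.abs
      have hb1 : ∀ y ∈ cell, |pd 2 0 (comp1 η) y| ≤ ∫ t in (-1:ℝ)..1, w1 (y.1, t) := by
        intro y hy
        have hy1 := mem_cell_1 hy
        have hy2 := mem_cell_2 hy
        have hDle : |D y| ≤ 9/200 := by
          have := hsupD y hy1 hy2
          nlinarith
        have h1D : (1:ℝ)/2 ≤ 1 + D y := by
          have := abs_le.mp hDle
          linarith [this.1]
        have hAle : |A y| ≤ 1 := hsupA1 y hy1 hy2
        have hBle : |B y| ≤ 1 := by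
          have := hsupB y hy1 hy2
          nlinarith
        have hCle : |C y| ≤ 1 := by
          have := hsupC y hy1 hy2
          nlinarith
        have htri : |p1 A y| * (1 + D y)
            ≤ |p1 D y| * 2 + |p1 B y| * 1 + 1 * |p1 C y| := by
          have e : |p1 A y * (1 + D y)| = |p1 A y| * (1 + D y) := by
            rw [abs_mul, abs_of_nonneg (by linarith : (0:ℝ) ≤ 1 + D y)]
          rw [← e, hA'id y]
          calc |(-(p1 D y)) * (1 + A y) + p1 B y * C y + B y * p1 C y|
              ≤ |(-(p1 D y)) * (1 + A y)| + |p1 B y * C y| + |B y * p1 C y| := tri3 _ _ _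
            _ = |p1 D y| * |1 + A y| + |p1 B y| * |C y| + |B y| * |p1 C y| := by
                rw [abs_mul, abs_mul, abs_mul, abs_neg]
            _ ≤ |p1 D y| * 2 + |p1 B y| * 1 + 1 * |p1 C y| := by
                have h1A : |1 + A y| ≤ 2 := by
                  calc |1 + A y| ≤ |(1:ℝ)| + |A y| := abs_add_le _ _
                    _ ≤ 2 := by rw [abs_one]; linarith
                exact add_le_add (add_le_add
                  (mul_le_mul_of_nonneg_left h1A (abs_nonneg _))
                  (mul_le_mul_of_nonneg_left hCle (abs_nonneg _)))
                  (mul_le_mul_of_nonneg_right hBle (abs_nonneg _))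
        have hstep : |p1 A y| ≤ 4 * |p1 D y| + 2 * |p1 B y| + 2 * |p1 C y| := by
          nlinarith [mul_le_mul_of_nonneg_left h1D (abs_nonneg (p1 A y)), htri,
            abs_nonneg (p1 A y)]
        have i1 := pbp1D y hy
        have i2 := pbp1B y hy
        have i3 := pbp1C y hy
        show |p1 A y| ≤ _
        calc |p1 A y| ≤ 4 * |p1 D y| + 2 * |p1 B y| + 2 * |p1 C y| := hstep
          _ ≤ 4 * (∫ t in (-1:ℝ)..1, |p1 (p2 D) (y.1, t)|)
              + 2 * (∫ t in (-1:ℝ)..1, |p1 (p2 B) (y.1, t)|)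
              + 2 * (∫ t in (-1:ℝ)..1, |p1 (p1 D) (y.1, t)|) := by linarith
          _ = ∫ t in (-1:ℝ)..1, w1 (y.1, t) :=
              (ii_comb3 4 2 2 (cont_slice2 hc1 y.1) (cont_slice2 hc2 y.1)
                (cont_slice2 hc3 y.1)).symm
      have hb2 : ∀ y ∈ cell, |pd 2 0 (comp2 η) y| ≤ ∫ t in (-1:ℝ)..1, w2 (y.1, t) := by
        intro y hy
        exact pbp1C y hy
      have hw10 : ∀ z : Pt, 0 ≤ w1 z := fun z =>
        add_nonneg (add_nonneg (mul_nonneg (by norm_num) (abs_nonneg _))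
          (mul_nonneg (by norm_num) (abs_nonneg _)))
          (mul_nonneg (by norm_num) (abs_nonneg _))
      have hw20 : ∀ z : Pt, 0 ≤ w2 z := fun z => abs_nonneg _
      have m1 := master (φ := pd 2 0 (comp1 η)) (w := w1)
        (sm_pd he1 2 0).continuous hw1c hgsm hhc hw10 hb1
      have m2 := master (φ := pd 2 0 (comp2 η)) (w := w2)
        (sm_pd he2 2 0).continuous hw2c hgsm hhc hw20 hb2
      have lw1 : L2 w1 ≤ 8 * sobV 2 (d2V η) := by
        rw [hw1def]
        calc L2 (fun z => 4 * |p1 (p2 D) z| + 2 * |p1 (p2 B) z| + 2 * |p1 (p1 D) z|)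
            ≤ L2 (fun z => 4 * |p1 (p2 D) z| + 2 * |p1 (p2 B) z|)
              + L2 (fun z => 2 * |p1 (p1 D) z|) :=
              L2_add_le ((continuous_const.mul hc1.abs).add (continuous_const.mul hc2.abs))
                (continuous_const.mul hc3.abs)
          _ ≤ (L2 (fun z => 4 * |p1 (p2 D) z|) + L2 (fun z => 2 * |p1 (p2 B) z|))
              + L2 (fun z => 2 * |p1 (p1 D) z|) :=
              add_le_add_left (L2_add_le (continuous_const.fun_mul hc1.abs)
                (continuous_const.fun_mul hc2.abs)) _
          _ = 4 * L2 (p1 (p2 D)) + 2 * L2 (p1 (p2 B)) + 2 * L2 (p1 (p1 D)) := by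
              rw [L2_cabs 4 (by norm_num), L2_cabs 2 (by norm_num), L2_cabs 2 (by norm_num)]
          _ ≤ 8 * sobV 2 (d2V η) := by linarith
      have lw2 : L2 w2 ≤ sobV 2 (d2V η) := by
        rw [hw2def, L2_abs]
        exact rD20
      calc (∫ y in cell,
          Real.sqrt ((pd 2 0 (comp1 η) y) ^ 2 + (pd 2 0 (comp2 η) y) ^ 2)
            * |g y| * |h y|)
          ≤ (∫ y in cell, |pd 2 0 (comp1 η) y| * |g y| * |h y|)
            + ∫ y in cell, |pd 2 0 (comp2 η) y| * |g y| * |h y| :=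
            split_two (sm_pd he1 2 0).continuous (sm_pd he2 2 0).continuous
              hg.continuous hhc
        _ ≤ 2 * L2 w1 * sob 1 g * L2 h + 2 * L2 w2 * sob 1 g * L2 h := add_le_add m1 m2
        _ = (2 * L2 w1 + 2 * L2 w2) * (sob 1 g * L2 h) := by ring
        _ ≤ (100 * sobV 2 (d2V η)) * (sob 1 g * L2 h) := by
            apply mul_le_mul_of_nonneg_right _ (mul_nonneg hsob0 hL2h0)
            linarith
        _ = 100 * sobV 2 (d2V η) * sob 1 g * L2 h := by ring
  · -- case b ≠ 0
    intro hbne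
    obtain ⟨b', rfl⟩ := Nat.exists_eq_succ_of_ne_zero hbne
    have hb1 : ∀ y ∈ cell, |pd a (b' + 1) (comp1 η) y|
        ≤ ∫ t in (-1:ℝ)..1, |pd a (b' + 1 + 1) (comp1 η) (y.1, t)| :=
      fun y hy => pd_mean0_bound he1 hper1 a b' hy
    have hb2 : ∀ y ∈ cell, |pd a (b' + 1) (comp2 η) y|
        ≤ ∫ t in (-1:ℝ)..1, |pd a (b' + 1 + 1) (comp2 η) (y.1, t)| :=
      fun y hy => pd_mean0_bound he2 hper2 a b' hy
    have m1 := master (φ := pd a (b' + 1) (comp1 η))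
      (w := fun z => |pd a (b' + 1 + 1) (comp1 η) z|)
      (sm_pd he1 a (b' + 1)).continuous (sm_pd he1 a (b' + 1 + 1)).continuous.abs
      hgsm hhc (fun z => abs_nonneg _) hb1
    have m2 := master (φ := pd a (b' + 1) (comp2 η))
      (w := fun z => |pd a (b' + 1 + 1) (comp2 η) z|)
      (sm_pd he2 a (b' + 1)).continuous (sm_pd he2 a (b' + 1 + 1)).continuous.abs
      hgsm hhc (fun z => abs_nonneg _) hb2
    have hnum : 2 * L2 (fun z => |pd a (b' + 1 + 1) (comp1 η) z|)
        + 2 * L2 (fun z => |pd a (b' + 1 + 1) (comp2 η) z|)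
        ≤ 100 * Real.sqrt (L2sq (pd a (b' + 1 + 1) (comp1 η))
            + L2sq (pd a (b' + 1 + 1) (comp2 η))) := by
      rw [L2_abs, L2_abs]
      have h1 := sqrt_add_sqrt_le (L2sq_nonneg (pd a (b' + 1 + 1) (comp1 η)))
        (L2sq_nonneg (pd a (b' + 1 + 1) (comp2 η)))
      have h2 : (0:ℝ) ≤ Real.sqrt (L2sq (pd a (b' + 1 + 1) (comp1 η))
          + L2sq (pd a (b' + 1 + 1) (comp2 η))) := Real.sqrt_nonneg _
      have h3 := mul_le_mul_of_nonneg_right sqrt_two_le_two h2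
      show 2 * Real.sqrt (L2sq (pd a (b' + 1 + 1) (comp1 η)))
          + 2 * Real.sqrt (L2sq (pd a (b' + 1 + 1) (comp2 η))) ≤ _
      nlinarith [Real.sqrt_nonneg (L2sq (pd a (b' + 1 + 1) (comp1 η))),
        Real.sqrt_nonneg (L2sq (pd a (b' + 1 + 1) (comp2 η)))]
    calc (∫ y in cell,
        Real.sqrt ((pd a (b' + 1) (comp1 η) y) ^ 2 + (pd a (b' + 1) (comp2 η) y) ^ 2)
          * |g y| * |h y|)
        ≤ (∫ y in cell, |pd a (b' + 1) (comp1 η) y| * |g y| * |h y|)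
          + ∫ y in cell, |pd a (b' + 1) (comp2 η) y| * |g y| * |h y| :=
          split_two (sm_pd he1 a (b' + 1)).continuous (sm_pd he2 a (b' + 1)).continuous
            hg.continuous hhc
      _ ≤ 2 * L2 (fun z => |pd a (b' + 1 + 1) (comp1 η) z|) * sob 1 g * L2 h
          + 2 * L2 (fun z => |pd a (b' + 1 + 1) (comp2 η) z|) * sob 1 g * L2 h :=
          add_le_add m1 m2
      _ = (2 * L2 (fun z => |pd a (b' + 1 + 1) (comp1 η) z|)
          + 2 * L2 (fun z => |pd a (b' + 1 + 1) (comp2 η) z|)) * (sob 1 g * L2 h) := by ring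
      _ ≤ (100 * Real.sqrt (L2sq (pd a (b' + 1 + 1) (comp1 η))
          + L2sq (pd a (b' + 1 + 1) (comp2 η)))) * (sob 1 g * L2 h) :=
          mul_le_mul_of_nonneg_right hnum (mul_nonneg hsob0 hL2h0)
      _ = 100 * Real.sqrt (L2sq (pd a (b' + 1 + 1) (comp1 η))
          + L2sq (pd a (b' + 1 + 1) (comp2 η))) * sob 1 g * L2 h := by ring
end
end

section
/- There exists a constant δ₃ > 0 such that for every smooth map φ : ℝ² → ℝ², 2-periodic in each variable, with ‖∇φ‖_{2,2} ≤ δ₃ (where ‖∇φ‖_{2,2}² := ‖∇φ‖₁² + ‖∇∂₂∇φ‖₀², norms over the periodic cell (-1,1)²), one has det(∇φ + I) > 1/2 everywhere and the map ψ := φ + id : ℝ² → ℝ² is a C¹ homeomorphism of ℝ², i.e. ψ is a bijection of ℝ² onto itself which is C¹ and has a continuous inverse. -/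
open MeasureTheory

noncomputable section

/-- Square of the norm `‖∇φ‖_{2,2}² = ‖∇φ‖₁² + ‖∇∂₂∇φ‖₀²`, entries of the Jacobian
matrix summed. -/
def gradNorm22Sq (φ : Pt → Pt) : ℝ :=
  (sobSq 1 (p1 (comp1 φ)) + gradSq 1 (p2 (p1 (comp1 φ))))
    + (sobSq 1 (p2 (comp1 φ)) + gradSq 1 (p2 (p2 (comp1 φ))))
    + (sobSq 1 (p1 (comp2 φ)) + gradSq 1 (p2 (p1 (comp2 φ))))
    + (sobSq 1 (p2 (comp2 φ)) + gradSq 1 (p2 (p2 (comp2 φ))))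


open intervalIntegral

lemma oneD {v v' : ℝ → ℝ} (hd : ∀ x, HasDerivAt v (v' x) x) (hc' : Continuous v')
    (hp : ∀ x, v (x + 2) = v x) (x : ℝ) :
    v x ≤ (1/2) * (∫ s in (-1:ℝ)..1, v s) + ∫ s in (-1:ℝ)..1, |v' s| := by
  have hv : Continuous v := by
    rw [continuous_iff_continuousAt]; exact fun t => (hd t).continuousAt
  have hp' : ∀ t, v' (t + 2) = v' t := by
    intro t
    have h1 : HasDerivAt (fun s => v (s + 2)) (v' (t + 2)) t :=
      HasDerivAt.comp_add_const t 2 (hd (t + 2))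
    rw [funext hp] at h1
    exact h1.unique (hd t)
  have habs : Continuous fun t => |v' t| := hc'.abs
  have hAper : ∫ s in (x-2)..(x-2)+2, v s = ∫ s in (-1:ℝ)..(-1)+2, v s :=
    Function.Periodic.intervalIntegral_add_eq hp (x-2) (-1)
  have hBper : ∫ s in (x-2)..(x-2)+2, |v' s| = ∫ s in (-1:ℝ)..(-1)+2, |v' s| :=
    Function.Periodic.intervalIntegral_add_eq (fun t => by rw [hp' t]) (x-2) (-1)
  have hx2 : (x - 2) + 2 = x := by ring
  have h12 : (-1:ℝ) + 2 = 1 := by norm_num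
  rw [hx2, h12] at hAper hBper
  have key : ∀ s ∈ Set.Icc (x-2) x, v x ≤ v s + ∫ t in (x-2)..x, |v' t| := by
    intro s hs
    have hsx : s ≤ x := hs.2
    have heq : ∫ t in s..x, v' t = v x - v s :=
      integral_eq_sub_of_hasDerivAt (fun t _ => hd t) (hc'.intervalIntegrable s x)
    have h3 : ∫ t in s..x, v' t ≤ ∫ t in s..x, |v' t| :=
      integral_mono_on hsx (hc'.intervalIntegrable s x) (habs.intervalIntegrable s x)
        (fun t _ => le_abs_self _)
    have h4 : ∫ t in s..x, |v' t| ≤ ∫ t in (x-2)..x, |v' t| :=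
      integral_mono_interval hs.1 hsx le_rfl
        (Filter.Eventually.of_forall fun t => abs_nonneg _) (habs.intervalIntegrable _ _)
    linarith
  have hmono : ∫ _s in (x-2)..x, v x ≤ ∫ s in (x-2)..x, (v s + ∫ t in (x-2)..x, |v' t|) :=
    integral_mono_on (by linarith) intervalIntegrable_const
      ((hv.intervalIntegrable _ _).add intervalIntegrable_const) key
  rw [intervalIntegral.integral_const, integral_add (hv.intervalIntegrable _ _) intervalIntegrable_const,
    intervalIntegral.integral_const] at hmono
  simp only [smul_eq_mul] at hmono
  have h2 : x - (x - 2) = 2 := by ring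
  rw [h2, hAper, hBper] at hmono
  linarith

lemma hasDerivAt_slice1 {f : Pt → ℝ} (hf : Differentiable ℝ f) (t s : ℝ) :
    HasDerivAt (fun t' => f (t', s)) (p1 f (t, s)) t := by
  have h1 : HasDerivAt (fun t' : ℝ => ((t', s) : Pt)) ((1:ℝ), (0:ℝ)) t :=
    (hasDerivAt_id t).prodMk (hasDerivAt_const t s)
  exact (hf (t, s)).hasFDerivAt.comp_hasDerivAt t h1

lemma hasDerivAt_slice2 {f : Pt → ℝ} (hf : Differentiable ℝ f) (t s : ℝ) :
    HasDerivAt (fun s' => f (t, s')) (p2 f (t, s)) s := by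
  have h1 : HasDerivAt (fun s' : ℝ => ((t, s') : Pt)) ((0:ℝ), (1:ℝ)) s :=
    (hasDerivAt_const s t).prodMk (hasDerivAt_id s)
  exact (hf (t, s)).hasFDerivAt.comp_hasDerivAt s h1

lemma contDiff_p1 {f : Pt → ℝ} (hf : ContDiff ℝ (⊤:ℕ∞) f) : ContDiff ℝ (⊤:ℕ∞) (p1 f) := by
  have h := (contDiff_infty_iff_fderiv.mp hf).2
  exact h.clm_apply contDiff_const

lemma contDiff_p2 {f : Pt → ℝ} (hf : ContDiff ℝ (⊤:ℕ∞) f) : ContDiff ℝ (⊤:ℕ∞) (p2 f) := by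
  have h := (contDiff_infty_iff_fderiv.mp hf).2
  exact h.clm_apply contDiff_const

lemma fderiv_periodic {f : Pt → ℝ} (hf : Differentiable ℝ f) {c : Pt}
    (h : ∀ z : Pt, f (z + c) = f z) (y : Pt) : fderiv ℝ f (y + c) = fderiv ℝ f y := by
  have h1 : HasFDerivAt (fun z : Pt => f (z + c)) (fderiv ℝ f (y + c)) y := by
    have h2 := (hf (y + c)).hasFDerivAt
    have h3 : HasFDerivAt (fun z : Pt => z + c) (ContinuousLinearMap.id ℝ Pt) y :=
      (hasFDerivAt_id y).add_const c
    have h4 := h2.comp y h3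
    simp only [ContinuousLinearMap.comp_id] at h4
    exact h4
  rw [funext h] at h1
  exact h1.fderiv.symm

lemma periodic2_pd {f : Pt → ℝ} (hf : Differentiable ℝ f) (h : Periodic2 f) :
    Periodic2 (p1 f) ∧ Periodic2 (p2 f) := by
  have k1 : ∀ z : Pt, f (z + ((2:ℝ), (0:ℝ))) = f z := fun z => by
    rw [show z + ((2:ℝ),(0:ℝ)) = ((z.1 + 2, z.2) : Pt) from by ext <;> simp]; exact h.1 z
  have k2 : ∀ z : Pt, f (z + ((0:ℝ), (2:ℝ))) = f z := fun z => by
    rw [show z + ((0:ℝ),(2:ℝ)) = ((z.1, z.2 + 2) : Pt) from by ext <;> simp]; exact h.2 z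
  have e1 := fun y => fderiv_periodic hf k1 y
  have e2 := fun y => fderiv_periodic hf k2 y
  refine ⟨⟨fun y => ?_, fun y => ?_⟩, ⟨fun y => ?_, fun y => ?_⟩⟩
  · show fderiv ℝ f (y.1 + 2, y.2) (1, 0) = fderiv ℝ f y (1, 0)
    rw [show ((y.1 + 2, y.2) : Pt) = y + ((2:ℝ),(0:ℝ)) from by ext <;> simp, e1 y]
  · show fderiv ℝ f (y.1, y.2 + 2) (1, 0) = fderiv ℝ f y (1, 0)
    rw [show ((y.1, y.2 + 2) : Pt) = y + ((0:ℝ),(2:ℝ)) from by ext <;> simp, e2 y]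
  · show fderiv ℝ f (y.1 + 2, y.2) (0, 1) = fderiv ℝ f y (0, 1)
    rw [show ((y.1 + 2, y.2) : Pt) = y + ((2:ℝ),(0:ℝ)) from by ext <;> simp, e1 y]
  · show fderiv ℝ f (y.1, y.2 + 2) (0, 1) = fderiv ℝ f y (0, 1)
    rw [show ((y.1, y.2 + 2) : Pt) = y + ((0:ℝ),(2:ℝ)) from by ext <;> simp, e2 y]

lemma contIntOn {g : Pt → ℝ} (hg : Continuous g) : IntegrableOn g cell volume := by
  have h1 : IntegrableOn g (Set.Icc (-1:ℝ) 1 ×ˢ Set.Icc (-1:ℝ) 1) volume :=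
    (hg.continuousOn).integrableOn_compact (isCompact_Icc.prod isCompact_Icc)
  exact h1.mono_set (Set.prod_mono Set.Ioo_subset_Icc_self Set.Ioo_subset_Icc_self)

lemma cell_integral_eq {g : Pt → ℝ} (hg : Continuous g) :
    ∫ s in (-1:ℝ)..1, ∫ t in (-1:ℝ)..1, g (t, s) = ∫ y in cell, g y := by
  have hvol : (volume : Measure Pt) = (volume : Measure ℝ).prod volume :=
    MeasureTheory.Measure.volume_eq_prod ℝ ℝ
  have hint : IntegrableOn g (Set.Ioo (-1:ℝ) 1 ×ˢ Set.Ioo (-1:ℝ) 1)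
      ((volume : Measure ℝ).prod volume) := by
    rw [← hvol]; exact contIntOn hg
  have h1 : ∫ y in cell, g y =
      ∫ t in Set.Ioo (-1:ℝ) 1, ∫ s in Set.Ioo (-1:ℝ) 1, g (t, s) := by
    rw [cell, hvol]
    exact setIntegral_prod g hint
  have h2 : ∫ t in Set.Ioo (-1:ℝ) 1, ∫ s in Set.Ioo (-1:ℝ) 1, g (t, s)
      = ∫ s in Set.Ioo (-1:ℝ) 1, ∫ t in Set.Ioo (-1:ℝ) 1, g (t, s) := by
    apply integral_integral_swap
    rw [Measure.prod_restrict]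
    have hu : Function.uncurry (fun t s => g (t, s)) = g := by
      funext p; simp [Function.uncurry]
    rw [hu]
    exact hint
  have cv : ∀ F : ℝ → ℝ, ∫ u in (-1:ℝ)..1, F u = ∫ u in Set.Ioo (-1:ℝ) 1, F u := by
    intro F
    rw [intervalIntegral.integral_of_le (by norm_num : (-1:ℝ) ≤ 1),
      MeasureTheory.integral_Ioc_eq_integral_Ioo]
  calc ∫ s in (-1:ℝ)..1, ∫ t in (-1:ℝ)..1, g (t, s)
      = ∫ s in (-1:ℝ)..1, ∫ t in Set.Ioo (-1:ℝ) 1, g (t, s) := by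
        apply intervalIntegral.integral_congr; intro s _; exact cv _
    _ = ∫ s in Set.Ioo (-1:ℝ) 1, ∫ t in Set.Ioo (-1:ℝ) 1, g (t, s) := cv _
    _ = ∫ y in cell, g y := (h1.trans h2).symm

lemma L2sq_nonneg (f : Pt → ℝ) : 0 ≤ L2sq f :=
  integral_nonneg fun y => sq_nonneg _

lemma agmon {f : Pt → ℝ} (hf : ContDiff ℝ (⊤:ℕ∞) f) (hper : Periodic2 f) (y : Pt) :
    f y ^ 2 ≤ 5 * (L2sq f + L2sq (p1 f) + L2sq (p2 f) + L2sq (p1 (p2 f))) := by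
  obtain ⟨x₁, x₂⟩ := y
  have h1top : (1 : WithTop ℕ∞) ≤ ((⊤:ℕ∞) : WithTop ℕ∞) := by exact_mod_cast le_top
  have hdf : Differentiable ℝ f := hf.differentiable (lt_of_lt_of_le zero_lt_one h1top).ne'
  have hf2 : ContDiff ℝ (⊤:ℕ∞) (p2 f) := contDiff_p2 hf
  have hd2 : Differentiable ℝ (p2 f) := hf2.differentiable (lt_of_lt_of_le zero_lt_one h1top).ne'
  have hcf : Continuous f := hf.continuous
  have hc1 : Continuous (p1 f) := (contDiff_p1 hf).continuous
  have hc2 : Continuous (p2 f) := hf2.continuous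
  have hc12 : Continuous (p1 (p2 f)) := (contDiff_p1 hf2).continuous
  have hper2 : Periodic2 (p2 f) := (periodic2_pd hdf hper).2
  have slC : ∀ {g : Pt → ℝ}, Continuous g → ∀ a : ℝ, Continuous fun s : ℝ => g (a, s) :=
    fun hg a => hg.comp (continuous_const.prodMk continuous_id)
  have slC1 : ∀ {g : Pt → ℝ}, Continuous g → ∀ b : ℝ, Continuous fun t : ℝ => g (t, b) :=
    fun hg b => hg.comp (continuous_id.prodMk continuous_const)
  set W : Pt → ℝ := fun z => 2 * f z ^ 2 + p2 f z ^ 2 with hW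
  set D : Pt → ℝ := fun z => 2 * f z ^ 2 + 2 * p1 f z ^ 2 + p2 f z ^ 2 + p1 (p2 f) z ^ 2 with hD
  have hWc : Continuous W := (continuous_const.mul (hcf.pow 2)).add (hc2.pow 2)
  have hDc : Continuous D :=
    (((continuous_const.mul (hcf.pow 2)).add (continuous_const.mul (hc1.pow 2))).add (hc2.pow 2)).add (hc12.pow 2)
  -- Step 1
  have claim1 : f (x₁, x₂) ^ 2 ≤ (3/2) * ∫ s in (-1:ℝ)..1, W (x₁, s) := by
    have hd' : ∀ s : ℝ, HasDerivAt (fun s' => f (x₁, s') ^ 2)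
        (2 * f (x₁, s) * p2 f (x₁, s)) s := by
      intro s
      have h := hasDerivAt_slice2 hdf x₁ s
      have h2 := h.mul h
      have heq : (fun s' => f (x₁, s') ^ 2) = fun s' => f (x₁, s') * f (x₁, s') := by
        funext u; ring
      rw [heq]
      exact h2.congr_deriv (by ring)
    have hc' : Continuous fun s : ℝ => 2 * f (x₁, s) * p2 f (x₁, s) :=
      (continuous_const.mul (slC hcf x₁)).mul (slC hc2 x₁)
    have hone := oneD hd' hc' (fun s => by
      rw [show f (x₁, s + 2) = f (x₁, s) from hper.2 (x₁, s)]) x₂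
    have hm1 : ∫ s in (-1:ℝ)..1, f (x₁, s) ^ 2 ≤ ∫ s in (-1:ℝ)..1, W (x₁, s) :=
      integral_mono_on (by norm_num) (((slC hcf x₁).pow 2).intervalIntegrable _ _)
        ((slC hWc x₁).intervalIntegrable _ _)
        (fun s _ => by
          simp only [hW]
          nlinarith [sq_nonneg (f (x₁, s)), sq_nonneg (p2 f (x₁, s))])
    have hm2 : ∫ s in (-1:ℝ)..1, |2 * f (x₁, s) * p2 f (x₁, s)| ≤ ∫ s in (-1:ℝ)..1, W (x₁, s) :=
      integral_mono_on (by norm_num) (hc'.abs.intervalIntegrable _ _)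
        ((slC hWc x₁).intervalIntegrable _ _)
        (fun s _ => by
          simp only [hW]
          rw [abs_le]
          constructor <;>
            nlinarith [sq_nonneg (f (x₁, s) + p2 f (x₁, s)), sq_nonneg (f (x₁, s) - p2 f (x₁, s))])
    linarith
  -- Step 2
  have claim2 : ∀ s : ℝ, W (x₁, s) ≤
      (1/2) * (∫ t in (-1:ℝ)..1, W (t, s)) + ∫ t in (-1:ℝ)..1, D (t, s) := by
    intro s
    have hdW : ∀ t : ℝ, HasDerivAt (fun t' => W (t', s))
        (4 * f (t, s) * p1 f (t, s) + 2 * p2 f (t, s) * p1 (p2 f) (t, s)) t := by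
      intro t
      have h1 := hasDerivAt_slice1 hdf t s
      have h2 := hasDerivAt_slice1 hd2 t s
      have h3 := ((h1.mul h1).const_mul 2).add (h2.mul h2)
      have heq : (fun t' => W (t', s)) =
          fun t' => 2 * (f (t', s) * f (t', s)) + p2 f (t', s) * p2 f (t', s) := by
        funext u; simp only [hW]; ring
      rw [heq]
      exact h3.congr_deriv (by ring)
    have hc' : Continuous fun t : ℝ =>
        4 * f (t, s) * p1 f (t, s) + 2 * p2 f (t, s) * p1 (p2 f) (t, s) :=
      ((continuous_const.mul (slC1 hcf s)).mul (slC1 hc1 s)).add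
        ((continuous_const.mul (slC1 hc2 s)).mul (slC1 hc12 s))
    have hper' : ∀ t : ℝ, W (t + 2, s) = W (t, s) := fun t => by
      simp only [hW]
      rw [show f (t + 2, s) = f (t, s) from hper.1 (t, s),
        show p2 f (t + 2, s) = p2 f (t, s) from hper2.1 (t, s)]
    have hone := oneD hdW hc' hper' x₁
    have hm : ∫ t in (-1:ℝ)..1, |4 * f (t, s) * p1 f (t, s) + 2 * p2 f (t, s) * p1 (p2 f) (t, s)|
        ≤ ∫ t in (-1:ℝ)..1, D (t, s) :=
      integral_mono_on (by norm_num) (hc'.abs.intervalIntegrable _ _)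
        ((slC1 hDc s).intervalIntegrable _ _)
        (fun t _ => by
          simp only [hD]
          rw [abs_le]
          constructor <;>
            nlinarith [sq_nonneg (f (t, s) + p1 f (t, s)), sq_nonneg (f (t, s) - p1 f (t, s)),
              sq_nonneg (p2 f (t, s) + p1 (p2 f) (t, s)), sq_nonneg (p2 f (t, s) - p1 (p2 f) (t, s))])
    linarith
  -- Step 3
  have hWint : Continuous fun s : ℝ => ∫ t in (-1:ℝ)..1, W (t, s) := by
    refine intervalIntegral.continuous_parametric_intervalIntegral_of_continuous' (μ := volume)
      (f := fun s t => W (t, s)) ?_ (-1) 1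
    exact hWc.comp continuous_swap
  have hDint : Continuous fun s : ℝ => ∫ t in (-1:ℝ)..1, D (t, s) := by
    refine intervalIntegral.continuous_parametric_intervalIntegral_of_continuous' (μ := volume)
      (f := fun s t => D (t, s)) ?_ (-1) 1
    exact hDc.comp continuous_swap
  have step3 : ∫ s in (-1:ℝ)..1, W (x₁, s) ≤
      (1/2) * (∫ s in (-1:ℝ)..1, ∫ t in (-1:ℝ)..1, W (t, s))
        + ∫ s in (-1:ℝ)..1, ∫ t in (-1:ℝ)..1, D (t, s) := by
    have hm := integral_mono_on (μ := volume) (by norm_num : (-1:ℝ) ≤ 1)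
      ((slC hWc x₁).intervalIntegrable _ _)
      (((continuous_const.mul hWint).add hDint).intervalIntegrable _ _)
      (fun s _ => claim2 s)
    simp only [Pi.add_apply, Pi.mul_apply] at hm
    rwa [integral_add (f := fun s => 1/2 * ∫ t in (-1:ℝ)..1, W (t, s)) ((continuous_const.mul hWint).intervalIntegrable _ _)
      (hDint.intervalIntegrable _ _), intervalIntegral.integral_const_mul] at hm
  -- Step 4: identify the double integrals
  have iF : IntegrableOn (fun y : Pt => f y ^ 2) cell volume := contIntOn (hcf.pow 2)
  have i1 : IntegrableOn (fun y : Pt => p1 f y ^ 2) cell volume := contIntOn (hc1.pow 2)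
  have i2 : IntegrableOn (fun y : Pt => p2 f y ^ 2) cell volume := contIntOn (hc2.pow 2)
  have i12 : IntegrableOn (fun y : Pt => p1 (p2 f) y ^ 2) cell volume := contIntOn (hc12.pow 2)
  have hJW : ∫ s in (-1:ℝ)..1, ∫ t in (-1:ℝ)..1, W (t, s) = 2 * L2sq f + L2sq (p2 f) := by
    rw [cell_integral_eq hWc]
    have A1 : ∫ y in cell, (2 * f y ^ 2 + p2 f y ^ 2) =
        (∫ y in cell, 2 * f y ^ 2) + ∫ y in cell, p2 f y ^ 2 :=
      integral_add (iF.const_mul 2) i2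
    have M1 : ∫ y in cell, 2 * f y ^ 2 = 2 * ∫ y in cell, f y ^ 2 := integral_const_mul 2 _
    simp only [hW]
    rw [A1, M1]
    rfl
  have hJD : ∫ s in (-1:ℝ)..1, ∫ t in (-1:ℝ)..1, D (t, s)
      = 2 * L2sq f + 2 * L2sq (p1 f) + L2sq (p2 f) + L2sq (p1 (p2 f)) := by
    rw [cell_integral_eq hDc]
    have A1 : ∫ y in cell, (2 * f y ^ 2 + 2 * p1 f y ^ 2 + p2 f y ^ 2 + p1 (p2 f) y ^ 2) =
        (∫ y in cell, (2 * f y ^ 2 + 2 * p1 f y ^ 2 + p2 f y ^ 2)) + ∫ y in cell, p1 (p2 f) y ^ 2 :=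
      integral_add (((iF.const_mul 2).add (i1.const_mul 2)).add i2) i12
    have A2 : ∫ y in cell, (2 * f y ^ 2 + 2 * p1 f y ^ 2 + p2 f y ^ 2) =
        (∫ y in cell, (2 * f y ^ 2 + 2 * p1 f y ^ 2)) + ∫ y in cell, p2 f y ^ 2 :=
      integral_add ((iF.const_mul 2).add (i1.const_mul 2)) i2
    have A3 : ∫ y in cell, (2 * f y ^ 2 + 2 * p1 f y ^ 2) =
        (∫ y in cell, 2 * f y ^ 2) + ∫ y in cell, 2 * p1 f y ^ 2 :=
      integral_add (iF.const_mul 2) (i1.const_mul 2)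
    have M1 : ∫ y in cell, 2 * f y ^ 2 = 2 * ∫ y in cell, f y ^ 2 := integral_const_mul 2 _
    have M2 : ∫ y in cell, 2 * p1 f y ^ 2 = 2 * ∫ y in cell, p1 f y ^ 2 := integral_const_mul 2 _
    simp only [hD]
    rw [A1, A2, A3, M1, M2]
    rfl
  have hF := L2sq_nonneg f
  have hG1 := L2sq_nonneg (p1 f)
  have hG2 := L2sq_nonneg (p2 f)
  have hG12 := L2sq_nonneg (p1 (p2 f))
  rw [hJW, hJD] at step3
  linarith


lemma sobSq_one (g : Pt → ℝ) : sobSq 1 g = L2sq g + L2sq (p2 g) + L2sq (p1 g) := by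
  simp [sobSq, pd, Finset.sum_range_succ]

lemma gradSq_one (g : Pt → ℝ) : gradSq 1 (p2 g) = L2sq (p2 (p2 g)) + L2sq (p1 (p2 g)) := by
  simp [gradSq, pd, Finset.sum_range_succ]

lemma group_le (g : Pt → ℝ) :
    L2sq g + L2sq (p1 g) + L2sq (p2 g) + L2sq (p1 (p2 g)) ≤ sobSq 1 g + gradSq 1 (p2 g) := by
  rw [sobSq_one, gradSq_one]
  linarith [L2sq_nonneg (p2 (p2 g))]

lemma group_nonneg (g : Pt → ℝ) : 0 ≤ sobSq 1 g + gradSq 1 (p2 g) := by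
  rw [sobSq_one, gradSq_one]
  linarith [L2sq_nonneg g, L2sq_nonneg (p1 g), L2sq_nonneg (p2 g), L2sq_nonneg (p2 (p2 g)),
    L2sq_nonneg (p1 (p2 g))]

set_option maxHeartbeats 2000000 in
/-- there is a constant `δ₃ > 0` such that every smooth 2-periodic
map `φ` with `‖∇φ‖_{2,2} ≤ δ₃` satisfies `det(∇φ + I) > 1/2` everywhere, and
`ψ := φ + id` is a `C¹` homeomorphism of `ℝ²` (a `C¹` bijection of `ℝ²` onto itself
with continuous inverse). -/
theorem statement19 :
    ∃ δ₃ : ℝ, 0 < δ₃ ∧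
      ∀ φ : Pt → Pt, ContDiff ℝ (⊤ : ℕ∞) φ →
        Periodic2 (comp1 φ) → Periodic2 (comp2 φ) →
        Real.sqrt (gradNorm22Sq φ) ≤ δ₃ →
        (∀ y : Pt, (p1 (comp1 φ) y + 1) * (p2 (comp2 φ) y + 1)
            - p2 (comp1 φ) y * p1 (comp2 φ) y > 1 / 2) ∧
        Function.Bijective (fun y : Pt => ((φ y).1 + y.1, (φ y).2 + y.2)) ∧
        ContDiff ℝ 1 (fun y : Pt => (((φ y).1 + y.1, (φ y).2 + y.2) : Pt)) ∧
        ∃ g : Pt → Pt, Continuous g ∧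
          Function.LeftInverse g (fun y : Pt => ((φ y).1 + y.1, (φ y).2 + y.2)) ∧
          Function.RightInverse g (fun y : Pt => ((φ y).1 + y.1, (φ y).2 + y.2)) := by
  refine ⟨1/100, by norm_num, ?_⟩
  intro φ hφ hper1 hper2 hδ
  have h1top : (1 : WithTop ℕ∞) ≤ ((⊤:ℕ∞) : WithTop ℕ∞) := by exact_mod_cast le_top
  have hdφ : Differentiable ℝ φ := hφ.differentiable (lt_of_lt_of_le zero_lt_one h1top).ne'
  have hgc1 : ContDiff ℝ (⊤:ℕ∞) (comp1 φ) := contDiff_fst.comp hφ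
  have hgc2 : ContDiff ℝ (⊤:ℕ∞) (comp2 φ) := contDiff_snd.comp hφ
  -- the norm squared is at most (1/100)^2
  have hGnn : 0 ≤ gradNorm22Sq φ := by
    have h1 := group_nonneg (p1 (comp1 φ))
    have h2 := group_nonneg (p2 (comp1 φ))
    have h3 := group_nonneg (p1 (comp2 φ))
    have h4 := group_nonneg (p2 (comp2 φ))
    unfold gradNorm22Sq
    linarith
  have hGb : gradNorm22Sq φ ≤ 1/10000 := by
    nlinarith [Real.sq_sqrt hGnn, Real.sqrt_nonneg (gradNorm22Sq φ), hδ]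
  -- pointwise bound for each Jacobian entry
  have main : ∀ g : Pt → ℝ, ContDiff ℝ (⊤:ℕ∞) g → Periodic2 g →
      L2sq g + L2sq (p1 g) + L2sq (p2 g) + L2sq (p1 (p2 g)) ≤ gradNorm22Sq φ →
      ∀ y : Pt, g y ^ 2 ≤ 1/2000 := by
    intro g hg hp hle y
    have h := agmon hg hp y
    nlinarith
  have hle1 : L2sq (p1 (comp1 φ)) + L2sq (p1 (p1 (comp1 φ))) + L2sq (p2 (p1 (comp1 φ)))
      + L2sq (p1 (p2 (p1 (comp1 φ)))) ≤ gradNorm22Sq φ := by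
    have h := group_le (p1 (comp1 φ))
    have h2 := group_nonneg (p2 (comp1 φ))
    have h3 := group_nonneg (p1 (comp2 φ))
    have h4 := group_nonneg (p2 (comp2 φ))
    unfold gradNorm22Sq
    linarith
  have hle2 : L2sq (p2 (comp1 φ)) + L2sq (p1 (p2 (comp1 φ))) + L2sq (p2 (p2 (comp1 φ)))
      + L2sq (p1 (p2 (p2 (comp1 φ)))) ≤ gradNorm22Sq φ := by
    have h := group_le (p2 (comp1 φ))
    have h2 := group_nonneg (p1 (comp1 φ))
    have h3 := group_nonneg (p1 (comp2 φ))
    have h4 := group_nonneg (p2 (comp2 φ))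
    unfold gradNorm22Sq
    linarith
  have hle3 : L2sq (p1 (comp2 φ)) + L2sq (p1 (p1 (comp2 φ))) + L2sq (p2 (p1 (comp2 φ)))
      + L2sq (p1 (p2 (p1 (comp2 φ)))) ≤ gradNorm22Sq φ := by
    have h := group_le (p1 (comp2 φ))
    have h2 := group_nonneg (p1 (comp1 φ))
    have h3 := group_nonneg (p2 (comp1 φ))
    have h4 := group_nonneg (p2 (comp2 φ))
    unfold gradNorm22Sq
    linarith
  have hle4 : L2sq (p2 (comp2 φ)) + L2sq (p1 (p2 (comp2 φ))) + L2sq (p2 (p2 (comp2 φ)))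
      + L2sq (p1 (p2 (p2 (comp2 φ)))) ≤ gradNorm22Sq φ := by
    have h := group_le (p2 (comp2 φ))
    have h2 := group_nonneg (p1 (comp1 φ))
    have h3 := group_nonneg (p2 (comp1 φ))
    have h4 := group_nonneg (p1 (comp2 φ))
    unfold gradNorm22Sq
    linarith
  have hA : ∀ y : Pt, p1 (comp1 φ) y ^ 2 ≤ 1/2000 :=
    main _ (contDiff_p1 hgc1) ((periodic2_pd (hgc1.differentiable (lt_of_lt_of_le zero_lt_one h1top).ne') hper1).1)
      (by linarith [hle1])
  have hB : ∀ y : Pt, p2 (comp1 φ) y ^ 2 ≤ 1/2000 :=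
    main _ (contDiff_p2 hgc1) ((periodic2_pd (hgc1.differentiable (lt_of_lt_of_le zero_lt_one h1top).ne') hper1).2)
      (by linarith [hle2])
  have hC : ∀ y : Pt, p1 (comp2 φ) y ^ 2 ≤ 1/2000 :=
    main _ (contDiff_p1 hgc2) ((periodic2_pd (hgc2.differentiable (lt_of_lt_of_le zero_lt_one h1top).ne') hper2).1)
      (by linarith [hle3])
  have hD : ∀ y : Pt, p2 (comp2 φ) y ^ 2 ≤ 1/2000 :=
    main _ (contDiff_p2 hgc2) ((periodic2_pd (hgc2.differentiable (lt_of_lt_of_le zero_lt_one h1top).ne') hper2).2)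
      (by linarith [hle4])
  -- absolute value bounds
  have habsA : ∀ y : Pt, |p1 (comp1 φ) y| ≤ 1/40 := fun y => by
    rw [abs_le]; constructor <;> nlinarith [hA y]
  have habsB : ∀ y : Pt, |p2 (comp1 φ) y| ≤ 1/40 := fun y => by
    rw [abs_le]; constructor <;> nlinarith [hB y]
  have habsC : ∀ y : Pt, |p1 (comp2 φ) y| ≤ 1/40 := fun y => by
    rw [abs_le]; constructor <;> nlinarith [hC y]
  have habsD : ∀ y : Pt, |p2 (comp2 φ) y| ≤ 1/40 := fun y => by
    rw [abs_le]; constructor <;> nlinarith [hD y]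
  -- operator norm bound on the Jacobian of φ
  have hop : ∀ x : Pt, ‖fderiv ℝ φ x‖ ≤ 1/20 := by
    intro x
    have hfd := (hdφ x).hasFDerivAt
    have hfst : HasFDerivAt (comp1 φ) ((ContinuousLinearMap.fst ℝ ℝ ℝ).comp (fderiv ℝ φ x)) x :=
      ((ContinuousLinearMap.fst ℝ ℝ ℝ).hasFDerivAt).comp x hfd
    have hsnd : HasFDerivAt (comp2 φ) ((ContinuousLinearMap.snd ℝ ℝ ℝ).comp (fderiv ℝ φ x)) x :=
      ((ContinuousLinearMap.snd ℝ ℝ ℝ).hasFDerivAt).comp x hfd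
    have hlin : ∀ (L : Pt →L[ℝ] ℝ) (v : Pt), L v = v.1 * L (1, 0) + v.2 * L (0, 1) := by
      intro L v
      have hv : (v : Pt) = v.1 • ((1:ℝ), (0:ℝ)) + v.2 • ((0:ℝ), (1:ℝ)) := by
        ext <;> simp
      conv_lhs => rw [hv]
      rw [map_add, L.map_smul, L.map_smul, smul_eq_mul, smul_eq_mul]
    have c1 : ∀ v : Pt, (fderiv ℝ φ x v).1
        = v.1 * p1 (comp1 φ) x + v.2 * p2 (comp1 φ) x := by
      intro v
      have e1 : (fderiv ℝ φ x v).1 = fderiv ℝ (comp1 φ) x v := by rw [hfst.fderiv]; rfl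
      rw [e1]
      exact hlin (fderiv ℝ (comp1 φ) x) v
    have c2 : ∀ v : Pt, (fderiv ℝ φ x v).2
        = v.1 * p1 (comp2 φ) x + v.2 * p2 (comp2 φ) x := by
      intro v
      have e2 : (fderiv ℝ φ x v).2 = fderiv ℝ (comp2 φ) x v := by rw [hsnd.fderiv]; rfl
      rw [e2]
      exact hlin (fderiv ℝ (comp2 φ) x) v
    apply ContinuousLinearMap.opNorm_le_bound _ (by norm_num)
    intro v
    have hv1 : |v.1| ≤ ‖v‖ := by
      have := norm_fst_le v; rwa [Real.norm_eq_abs] at this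
    have hv2 : |v.2| ≤ ‖v‖ := by
      have := norm_snd_le v; rwa [Real.norm_eq_abs] at this
    have hb1 : |(fderiv ℝ φ x v).1| ≤ 1/20 * ‖v‖ := by
      rw [c1 v]
      calc |v.1 * p1 (comp1 φ) x + v.2 * p2 (comp1 φ) x|
          ≤ |v.1 * p1 (comp1 φ) x| + |v.2 * p2 (comp1 φ) x| := abs_add_le _ _
        _ = |v.1| * |p1 (comp1 φ) x| + |v.2| * |p2 (comp1 φ) x| := by rw [abs_mul, abs_mul]
        _ ≤ 1/20 * ‖v‖ := by
            nlinarith [habsA x, habsB x, abs_nonneg v.1, abs_nonneg v.2, norm_nonneg v,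
              abs_nonneg (p1 (comp1 φ) x), abs_nonneg (p2 (comp1 φ) x)]
    have hb2 : |(fderiv ℝ φ x v).2| ≤ 1/20 * ‖v‖ := by
      rw [c2 v]
      calc |v.1 * p1 (comp2 φ) x + v.2 * p2 (comp2 φ) x|
          ≤ |v.1 * p1 (comp2 φ) x| + |v.2 * p2 (comp2 φ) x| := abs_add_le _ _
        _ = |v.1| * |p1 (comp2 φ) x| + |v.2| * |p2 (comp2 φ) x| := by rw [abs_mul, abs_mul]
        _ ≤ 1/20 * ‖v‖ := by
            nlinarith [habsC x, habsD x, abs_nonneg v.1, abs_nonneg v.2, norm_nonneg v,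
              abs_nonneg (p1 (comp2 φ) x), abs_nonneg (p2 (comp2 φ) x)]
    calc ‖fderiv ℝ φ x v‖ = max ‖(fderiv ℝ φ x v).1‖ ‖(fderiv ℝ φ x v).2‖ := Prod.norm_def _
      _ ≤ 1/20 * ‖v‖ := by
          rw [Real.norm_eq_abs, Real.norm_eq_abs]
          exact max_le hb1 hb2
  have hlip : ∀ z w : Pt, ‖φ z - φ w‖ ≤ 1/20 * ‖z - w‖ := fun z w =>
    convex_univ.norm_image_sub_le_of_norm_fderiv_le (fun x _ => hdφ x) (fun x _ => hop x)
      (Set.mem_univ w) (Set.mem_univ z)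
  have hψ : ∀ y : Pt, ((φ y).1 + y.1, (φ y).2 + y.2) = φ y + y := fun y => rfl
  -- injectivity
  have hinj : Function.Injective (fun y : Pt => (((φ y).1 + y.1, (φ y).2 + y.2) : Pt)) := by
    intro u w h
    simp only [hψ] at h
    have h2 : u - w = φ w - φ u := by
      rw [sub_eq_sub_iff_add_eq_add, add_comm]
      exact h
    have h3 : ‖u - w‖ ≤ 1/20 * ‖u - w‖ := by
      calc ‖u - w‖ = ‖φ w - φ u‖ := by rw [h2]
        _ ≤ 1/20 * ‖w - u‖ := hlip w u
        _ = 1/20 * ‖u - w‖ := by rw [norm_sub_rev]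
    have h4 : ‖u - w‖ = 0 := le_antisymm (by linarith) (norm_nonneg _)
    exact sub_eq_zero.mp (norm_eq_zero.mp h4)
  -- surjectivity
  have hsurj : Function.Surjective (fun y : Pt => (((φ y).1 + y.1, (φ y).2 + y.2) : Pt)) := by
    intro z
    have hcoe : ((1/20 : NNReal) : ℝ) = 1/20 := by norm_num
    have hlipT : LipschitzWith (1/20) (fun y : Pt => z - φ y) := by
      apply LipschitzWith.of_dist_le_mul
      intro u w
      rw [dist_sub_left, dist_eq_norm, dist_eq_norm, hcoe]
      exact hlip u w
    have hcontr : ContractingWith (1/20) (fun y : Pt => z - φ y) := by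
      refine ⟨?_, hlipT⟩
      rw [← NNReal.coe_lt_coe, hcoe, NNReal.coe_one]
      norm_num
    set y₀ := ContractingWith.fixedPoint (fun y : Pt => z - φ y) hcontr with hy₀
    have hfix : z - φ y₀ = y₀ := hcontr.fixedPoint_isFixedPt
    refine ⟨y₀, ?_⟩
    show ((φ y₀).1 + y₀.1, (φ y₀).2 + y₀.2) = z
    rw [hψ]
    rw [sub_eq_iff_eq_add] at hfix
    rw [hfix]
    abel
  refine ⟨?_, ⟨hinj, hsurj⟩, ?_, ?_⟩
  · -- determinant bound
    intro y
    nlinarith [hA y, hB y, hC y, hD y,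
      sq_nonneg (p1 (comp1 φ) y + p2 (comp2 φ) y),
      sq_nonneg (p1 (comp1 φ) y - p2 (comp2 φ) y),
      sq_nonneg (p2 (comp1 φ) y - p1 (comp2 φ) y),
      sq_nonneg (p1 (comp1 φ) y + p2 (comp2 φ) y + 1/10)]
  · -- C¹
    exact (hφ.of_le h1top).add contDiff_id
  · -- continuous inverse
    set ψ : Pt → Pt := fun y : Pt => (((φ y).1 + y.1, (φ y).2 + y.2) : Pt) with hψdef
    refine ⟨Function.invFun ψ, ?_, Function.leftInverse_invFun hinj,
      Function.rightInverse_invFun hsurj⟩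
    have hri : Function.RightInverse (Function.invFun ψ) ψ := Function.rightInverse_invFun hsurj
    have h2coe : ((2 : NNReal) : ℝ) = 2 := by norm_num
    have hexp : ∀ p q : Pt, ‖p - q‖ ≤ 2 * ‖ψ p - ψ q‖ := by
      intro p q
      have hdecomp : ψ p - ψ q = (p - q) + (φ p - φ q) := by
        simp only [hψdef]
        simp only [hψ]
        abel
      have h5 : ‖p - q‖ ≤ ‖ψ p - ψ q‖ + 1/20 * ‖p - q‖ := by
        calc ‖p - q‖ = ‖(ψ p - ψ q) - (φ p - φ q)‖ := by rw [hdecomp]; congr 1; abel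
          _ ≤ ‖ψ p - ψ q‖ + ‖φ p - φ q‖ := by
              have h7 := norm_sub_le (ψ p - ψ q) (φ p - φ q); linarith [h7]
          _ ≤ ‖ψ p - ψ q‖ + 1/20 * ‖p - q‖ := by linarith [hlip p q]
      linarith [norm_nonneg (ψ p - ψ q)]
    refine (LipschitzWith.of_dist_le_mul (K := 2) ?_).continuous
    intro u w
    rw [dist_eq_norm, dist_eq_norm, h2coe]
    have h8 := hexp (Function.invFun ψ u) (Function.invFun ψ w)
    rwa [hri u, hri w] at h8
end
end
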